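/- arXiv:2106.07532 — 6 statements merged into one kernel-verified Lean document; each statement's English description precedes it below -/
import Mathlib

section
/- For every θ with 0 < θ < π and every x > 1, the function F_θ(x) = arctan(sin θ / (cos θ + 1/x)) − x · arctan(sin θ / (cos θ + x)) is strictly positive, where arctan here denotes the branch taking values in [0, π] (i.e., the angle argument). -/
open Real Complex

lemma arctan_lt_self {u : ℝ} (hu : 0 < u) : Real.arctan u < u := by
  have h0 : 0 < Real.arctan u := by
    have := Real.arctan_strictMono hu
    rwa [Real.arctan_zero] at this
  have h2 := Real.lt_tan h0 (Real.arctan_lt_pi_div_two u)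
  rwa [Real.tan_arctan] at h2

lemma key_ineq (θ : ℝ) (hθ₀ : 0 < θ) (hθπ : θ < Real.pi) {x : ℝ} (hx : 1 < x) :
    (1 + x) * Real.arctan (Real.sin θ / (x + Real.cos θ)) < θ := by
  set s := Real.sin θ with hs_def
  set c := Real.cos θ with hc_def
  have hs : 0 < s := Real.sin_pos_of_pos_of_lt_pi hθ₀ hθπ
  have hc1 : c < 1 := by
    have := Real.cos_lt_cos_of_nonneg_of_le_pi le_rfl hθπ.le hθ₀
    simpa using this
  have hcm1 : -1 < c := by
    have := Real.cos_lt_cos_of_nonneg_of_le_pi hθ₀.le le_rfl hθπ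
    simpa using this
  set f : ℝ → ℝ := fun t => θ - (1 + t) * Real.arctan (s / (t + c)) with hf_def
  have hpos : ∀ t : ℝ, 1 ≤ t → 0 < t + c := fun t ht => by linarith
  have hmono : StrictMonoOn f (Set.Ici 1) := by
    have hint : interior (Set.Ici (1:ℝ)) = Set.Ioi 1 := interior_Ici
    apply strictMonoOn_of_hasDerivWithinAt_pos (convex_Ici 1)
      (f' := fun t => -(1 * Real.arctan (s / (t + c)) +
        (1 + t) * (1 / (1 + (s / (t + c)) ^ 2) * ((0 * (t + c) - s * 1) / (t + c) ^ 2))))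
    · apply ContinuousOn.sub continuousOn_const
      apply ContinuousOn.mul (by fun_prop)
      apply Real.continuous_arctan.comp_continuousOn
      exact ContinuousOn.div continuousOn_const (by fun_prop)
        (fun t ht => (hpos t ht).ne')
    · intro t ht
      rw [hint] at ht ⊢
      have ht1 : (1:ℝ) < t := ht
      have htc : 0 < t + c := hpos t ht1.le
      have h1 : HasDerivAt (fun t => s / (t + c)) ((0 * (t + c) - s * 1) / (t + c) ^ 2) t :=
        (hasDerivAt_const t s).div ((hasDerivAt_id t).add_const c) htc.ne'
      have h2 := h1.arctan
      have h3 : HasDerivAt (fun t => (1 + t) * Real.arctan (s / (t + c)))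
          (1 * Real.arctan (s / (t + c)) + (1 + t) *
            (1 / (1 + (s / (t + c)) ^ 2) * ((0 * (t + c) - s * 1) / (t + c) ^ 2))) t := by
        have h4 : HasDerivAt (fun t : ℝ => 1 + t) 1 t := by
          simpa using (hasDerivAt_id t).const_add 1
        exact h4.mul h2
      have := (hasDerivAt_const t θ).sub h3
      rw [zero_sub] at this
      exact this.hasDerivWithinAt
    · intro t ht
      rw [hint] at ht
      have ht1 : (1:ℝ) < t := ht
      have htc : 0 < t + c := hpos t ht1.le
      have hu : 0 < s / (t + c) := div_pos hs htc
      have hden : 0 < (t + c) ^ 2 + s ^ 2 := by positivity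
      have hsc : s ^ 2 + c ^ 2 = 1 := Real.sin_sq_add_cos_sq θ
      have hstep : s / (t + c) ≤ (1 + t) * s / ((t + c) ^ 2 + s ^ 2) := by
        rw [div_le_div_iff₀ htc hden]
        nlinarith [mul_nonneg hs.le (mul_nonneg (sub_nonneg.2 ht1.le) (sub_nonneg.2 hc1.le))]
      have harc : Real.arctan (s / (t + c)) < (1 + t) * s / ((t + c) ^ 2 + s ^ 2) :=
        lt_of_lt_of_le (arctan_lt_self hu) hstep
      have heq : (1 + t) * (1 / (1 + (s / (t + c)) ^ 2) * ((0 * (t + c) - s * 1) / (t + c) ^ 2))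
          = -((1 + t) * s / ((t + c) ^ 2 + s ^ 2)) := by
        field_simp
        ring
      rw [heq]
      linarith
  have hhalf : Real.arctan (s / (1 + c)) = θ / 2 := by
    have hch : 0 < Real.cos (θ / 2) :=
      Real.cos_pos_of_mem_Ioo ⟨by linarith [Real.pi_pos], by linarith⟩
    have hsin2 : s = 2 * Real.sin (θ / 2) * Real.cos (θ / 2) := by
      have h := Real.sin_two_mul (θ / 2)
      rw [show 2 * (θ / 2) = θ by ring] at h
      rw [hs_def, ← h]
    have hcos2 : 1 + c = 2 * Real.cos (θ / 2) ^ 2 := by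
      have := Real.cos_sq (θ / 2)
      rw [show 2 * (θ / 2) = θ by ring] at this
      rw [hc_def]
      linarith
    have : s / (1 + c) = Real.tan (θ / 2) := by
      rw [hsin2, hcos2, Real.tan_eq_sin_div_cos]
      field_simp
    rw [this, Real.arctan_tan (by linarith [Real.pi_pos]) (by linarith)]
  have h1mem : (1:ℝ) ∈ Set.Ici (1:ℝ) := Set.mem_Ici.mpr le_rfl
  have hxmem : x ∈ Set.Ici (1:ℝ) := Set.mem_Ici.mpr hx.le
  have := hmono h1mem hxmem hx
  have hf1 : f 1 = 0 := by
    simp only [hf_def]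
    rw [hhalf]
    ring
  rw [hf1] at this
  simp only [hf_def] at this
  linarith

theorem stmt_3 (θ x : ℝ) (hθ₀ : 0 < θ) (hθπ : θ < Real.pi) (hx : 1 < x) :
    0 < Complex.arg ((Real.cos θ + 1 / x : ℝ) + Real.sin θ * Complex.I)
        - x * Complex.arg ((Real.cos θ + x : ℝ) + Real.sin θ * Complex.I) := by
  have hkey := key_ineq θ hθ₀ hθπ hx
  set s : ℝ := Real.sin θ with hs_def
  set c : ℝ := Real.cos θ with hc_def
  have hs : 0 < s := Real.sin_pos_of_pos_of_lt_pi hθ₀ hθπ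
  have hcm1 : -1 < c := by
    have := Real.cos_lt_cos_of_nonneg_of_le_pi hθ₀.le le_rfl hθπ
    simpa [hc_def] using this
  have hx0 : (0:ℝ) < x := by linarith
  set z₁ : ℂ := (c + 1 / x : ℝ) + s * Complex.I with hz₁def
  set z₂ : ℂ := (c + x : ℝ) + s * Complex.I with hz₂def
  have him1 : z₁.im = s := by
    simp [hz₁def]
  have him2 : z₂.im = s := by
    simp [hz₂def]
  have hre2 : z₂.re = c + x := by
    simp [hz₂def]
  have hre2pos : 0 < z₂.re := by rw [hre2]; linarith
  have hz1ne : z₁ ≠ 0 := fun h => hs.ne' (by rw [← him1, h, Complex.zero_im])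
  have hz2ne : z₂ ≠ 0 := fun h => hs.ne' (by rw [← him2, h, Complex.zero_im])
  have habsB : |z₂.arg| < Real.pi / 2 :=
    Complex.abs_arg_lt_pi_div_two_iff.2 (Or.inl hre2pos)
  have hB : z₂.arg = Real.arctan (s / (x + c)) := by
    rw [← Real.arctan_tan (abs_lt.1 habsB).1 (abs_lt.1 habsB).2, Complex.tan_arg,
      him2, hre2, add_comm c x]
  have hBpos : 0 < z₂.arg := by
    rw [hB]
    have := Real.arctan_strictMono (div_pos hs (by linarith : (0:ℝ) < x + c))
    rwa [Real.arctan_zero] at this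
  have hBlt : z₂.arg < Real.pi / 2 := (abs_lt.1 habsB).2
  have hxx : 1 / x * x = 1 := by field_simp
  have hr : (0:ℝ) < 2 * c + x + 1 / x := by
    nlinarith [sq_nonneg (x - 1)]
  have hsc : s ^ 2 + c ^ 2 = 1 := Real.sin_sq_add_cos_sq θ
  have hprod : z₁ * z₂ = ((2 * c + x + 1 / x : ℝ) : ℂ) * ((c : ℝ) + (s : ℝ) * Complex.I) := by
    rw [hz₁def, hz₂def]
    apply Complex.ext
    · simp only [Complex.mul_re, Complex.add_re, Complex.add_im, Complex.ofReal_re,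
        Complex.ofReal_im, Complex.mul_im, Complex.I_re, Complex.I_im, mul_zero, mul_one,
        zero_mul, sub_zero, zero_add, add_zero]
      linear_combination hxx - hsc
    · simp only [Complex.mul_re, Complex.add_re, Complex.add_im, Complex.ofReal_re,
        Complex.ofReal_im, Complex.mul_im, Complex.I_re, Complex.I_im, mul_zero, mul_one,
        zero_mul, sub_zero, zero_add, add_zero]
      ring
  have hargprod : (z₁ * z₂).arg = θ := by
    rw [hprod, Complex.arg_real_mul _ hr, hs_def, hc_def, Complex.ofReal_cos,
      Complex.ofReal_sin, Complex.arg_cos_add_sin_mul_I ⟨by linarith [Real.pi_pos], hθπ.le⟩]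
  have hangle := Complex.arg_mul_coe_angle hz1ne hz2ne
  rw [hargprod, ← Real.Angle.coe_add] at hangle
  obtain ⟨k, hk⟩ := Real.Angle.angle_eq_iff_two_pi_dvd_sub.1 hangle
  have hA0 : 0 ≤ z₁.arg := Complex.arg_nonneg_iff.2 (by rw [him1]; exact hs.le)
  have hAπ : z₁.arg ≤ Real.pi := Complex.arg_le_pi z₁
  have hπ := Real.pi_pos
  clear_value s c z₁ z₂
  have hk0 : k = 0 := by
    rcases lt_trichotomy k 0 with h | h | h
    · have hk1 : (k:ℝ) ≤ -1 := by exact_mod_cast Int.le_of_lt_add_one (by simpa using h)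
      have h2 : 2 * Real.pi * (k:ℝ) ≤ 2 * Real.pi * (-1) :=
        mul_le_mul_of_nonneg_left hk1 (by linarith)
      linarith
    · exact h
    · have hk1 : (1:ℝ) ≤ (k:ℝ) := by exact_mod_cast h
      have h2 : 2 * Real.pi * 1 ≤ 2 * Real.pi * (k:ℝ) :=
        mul_le_mul_of_nonneg_left hk1 (by linarith)
      linarith
  rw [hk0] at hk
  push_cast at hk
  have hsum : θ = z₁.arg + z₂.arg := by linarith
  rw [← hB] at hkey
  linarith
end

section
/- Let d ≥ 1, n ≥ 0 an integer, and c₁,…,c_d > 0. For each j, Σ_{|α|=n} (n!/(α₁!⋯α_d!))² · c^{2α}/(α_j + 1) = ∫₀¹ ∫_{T^d} |c₁ζ₁ + ⋯ + r·c_jζ_j + ⋯ + c_dζ_d|^{2n} dm_d(ζ) · 2r dr, where c^{2α} = ∏_k c_k^{2α_k}. -/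
open MeasureTheory Finset

/-- The multi-indices `α : Fin d → ℕ` with `|α| = n`, as a finset. -/
def multiIndices (d n : ℕ) : Finset (Fin d → ℕ) :=
  (Fintype.piFinset fun _ : Fin d => Finset.range (n + 1)).filter fun α => ∑ j, α j = n

lemma integral_e2 (m : ℤ) :
    (∫ x in Set.Ioc (0:ℝ) 1, Complex.exp (2 * Real.pi * Complex.I * m * x)) =
      if m = 0 then 1 else 0 := by
  rw [← intervalIntegral.integral_of_le zero_le_one]
  split_ifs with h
  · subst h; simp
  · have hc : (2 * (Real.pi:ℂ) * Complex.I * m) ≠ 0 := by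
      simp [Real.pi_ne_zero, Complex.I_ne_zero, h]
    rw [show (fun x : ℝ => Complex.exp (2 * Real.pi * Complex.I * m * x)) = fun x : ℝ =>
        Complex.exp ((2 * (Real.pi:ℂ) * Complex.I * m) * x) from rfl,
      integral_exp_mul_complex hc]
    have h1 : (2 * (Real.pi:ℂ) * Complex.I * m) * (1:ℝ) = m * (2 * Real.pi * Complex.I) := by
      push_cast; ring
    have h0 : (2 * (Real.pi:ℂ) * Complex.I * m) * (0:ℝ) = 0 := by push_cast; ring
    rw [h1, h0, Complex.exp_int_mul_two_pi_mul_I, Complex.exp_zero, sub_self, zero_div]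

lemma restrict_pi_eq (d : ℕ) :
    (volume : Measure (Fin d → ℝ)).restrict (Set.univ.pi fun _ => Set.Ioc (0:ℝ) 1) =
      Measure.pi (fun _ : Fin d => volume.restrict (Set.Ioc (0:ℝ) 1)) := by
  refine (Measure.pi_eq fun s hs => ?_).symm
  rw [Measure.restrict_apply (MeasurableSet.univ_pi hs), ← Set.pi_inter_distrib,
    volume_pi, Measure.pi_pi]
  exact Finset.prod_congr rfl fun i _ => (Measure.restrict_apply (hs i)).symm

lemma integral_pi_prod {ι : Type*} [Fintype ι] {E : Type*} [MeasurableSpace E] (μ : Measure E)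
    [SigmaFinite μ] (f : ι → E → ℂ) :
    ∫ x : ι → E, ∏ i, f i (x i) ∂(Measure.pi fun _ => μ) = ∏ i, ∫ x, f i x ∂μ := by
  letI : MeasureSpace E := ⟨μ⟩
  exact MeasureTheory.integral_fintype_prod_eq_prod f

lemma multiIndices_eq (d n : ℕ) :
    ((Fintype.piFinset fun _ : Fin d => Finset.range (n + 1)).filter fun α => ∑ j, α j = n)
      = Finset.piAntidiag Finset.univ n := by
  ext α
  simp only [Finset.mem_filter, Fintype.mem_piFinset, Finset.mem_range, Finset.mem_piAntidiag,
    Finset.mem_univ, implies_true, and_true]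
  refine ⟨fun h => h.2, fun h => ⟨fun i => ?_, h⟩⟩
  have : α i ≤ n := h ▸ Finset.single_le_sum (fun k _ => Nat.zero_le _) (Finset.mem_univ i)
  omega

lemma integrable_pi_prod {ι : Type*} [Fintype ι] {E : Type*} [MeasurableSpace E] (μ : Measure E)
    [SigmaFinite μ] (f : ι → E → ℂ) (hf : ∀ i, Integrable (f i) μ) :
    Integrable (fun x : ι → E => ∏ i, f i (x i)) (Measure.pi fun _ => μ) := by
  letI : MeasureSpace E := ⟨μ⟩
  exact Integrable.fintype_prod hf

lemma integral_h (A : ℂ) (p q : ℕ) :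
    (∫ x in Set.Ioc (0:ℝ) 1,
        (A * Complex.exp (2 * Real.pi * Complex.I * x)) ^ p *
          (A * Complex.exp (-(2 * Real.pi * Complex.I * x))) ^ q)
      = if p = q then A ^ (2 * p) else 0 := by
  have key : ∀ x : ℝ, (A * Complex.exp (2 * Real.pi * Complex.I * x)) ^ p *
      (A * Complex.exp (-(2 * Real.pi * Complex.I * x))) ^ q
      = A ^ (p + q) * Complex.exp (2 * Real.pi * Complex.I * (((p:ℤ) - q : ℤ) : ℂ) * x) := by
    intro x
    rw [mul_pow, mul_pow, ← Complex.exp_nat_mul, ← Complex.exp_nat_mul,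
      mul_mul_mul_comm, pow_add, ← Complex.exp_add]
    congr 1
    push_cast
    ring
  simp_rw [key]
  rw [MeasureTheory.integral_const_mul, integral_e2]
  split_ifs with h1 h2 h2
  · rw [mul_one]; congr 1; omega
  · exact absurd (by omega : p = q) h2
  · exact absurd (by omega : (p:ℤ) - q = 0) h1
  · rw [mul_zero]

lemma cont_h (A : ℂ) (p q : ℕ) :
    Continuous (fun x : ℝ => (A * Complex.exp (2 * Real.pi * Complex.I * x)) ^ p *
      (A * Complex.exp (-(2 * Real.pi * Complex.I * x))) ^ q) := by
  fun_prop

lemma integrable_h (A : ℂ) (p q : ℕ) :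
    Integrable (fun x : ℝ => (A * Complex.exp (2 * Real.pi * Complex.I * x)) ^ p *
      (A * Complex.exp (-(2 * Real.pi * Complex.I * x))) ^ q)
      (volume.restrict (Set.Ioc (0:ℝ) 1)) :=
  (cont_h A p q).integrableOn_Ioc

lemma integral_cofReal {α : Type*} [MeasurableSpace α] {μ : Measure α} (f : α → ℝ) :
    ∫ x, ((f x : ℝ) : ℂ) ∂μ = ((∫ x, f x ∂μ : ℝ) : ℂ) :=
  integral_ofReal

lemma inner_integral (d n : ℕ) (a : Fin d → ℝ) :
    (∫ θ in Set.univ.pi fun _ : Fin d => Set.Ioc (0:ℝ) 1,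
        ‖∑ k, (a k : ℂ) * Complex.exp (2 * Real.pi * Complex.I * θ k)‖ ^ (2 * n))
      = ∑ α ∈ Finset.piAntidiag (Finset.univ : Finset (Fin d)) n,
          (Nat.multinomial Finset.univ α : ℝ) ^ 2 * ∏ k, a k ^ (2 * α k) := by
  rw [restrict_pi_eq d]
  apply Complex.ofReal_injective
  refine ((integral_cofReal _).symm.trans ?_)
  have hpt : ∀ θ : Fin d → ℝ,
      ((‖∑ k, (a k : ℂ) * Complex.exp (2 * Real.pi * Complex.I * θ k)‖ ^ (2*n) : ℝ) : ℂ)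
      = (∑ k, (a k:ℂ) * Complex.exp (2 * Real.pi * Complex.I * θ k)) ^ n *
        (∑ k, (a k:ℂ) * Complex.exp (-(2 * Real.pi * Complex.I * θ k))) ^ n := by
    intro θ
    have h1 : (∑ k, (a k:ℂ) * Complex.exp (-(2 * Real.pi * Complex.I * θ k)))
        = (starRingEnd ℂ) (∑ k, (a k:ℂ) * Complex.exp (2 * Real.pi * Complex.I * θ k)) := by
      rw [map_sum]
      refine Finset.sum_congr rfl fun k _ => ?_
      rw [map_mul, Complex.conj_ofReal, ← Complex.exp_conj]
      congr 1
      simp only [map_mul, Complex.conj_I, Complex.conj_ofReal, map_ofNat]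
      ring
    rw [h1, ← mul_pow, Complex.mul_conj, ← Complex.ofReal_pow]
    congr 1
    rw [pow_mul, ← Complex.sq_norm]
  simp_rw [hpt, Finset.sum_pow_eq_sum_piAntidiag, Finset.sum_mul_sum]
  have hterm : ∀ (α β : Fin d → ℕ) (θ : Fin d → ℝ),
      ((Nat.multinomial Finset.univ α : ℂ) *
          ∏ k, ((a k:ℂ) * Complex.exp (2 * Real.pi * Complex.I * θ k)) ^ (α k)) *
        ((Nat.multinomial Finset.univ β : ℂ) *
          ∏ k, ((a k:ℂ) * Complex.exp (-(2 * Real.pi * Complex.I * θ k))) ^ (β k))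
      = ((Nat.multinomial Finset.univ α : ℂ) * (Nat.multinomial Finset.univ β : ℂ)) *
          ∏ k, ((a k:ℂ) * Complex.exp (2 * Real.pi * Complex.I * θ k)) ^ (α k) *
            ((a k:ℂ) * Complex.exp (-(2 * Real.pi * Complex.I * θ k))) ^ (β k) := by
    intro α β θ
    rw [Finset.prod_mul_distrib]
    ring
  simp_rw [hterm]
  have HT : ∀ (α β : Fin d → ℕ), Integrable (fun θ : Fin d → ℝ =>
      ((Nat.multinomial Finset.univ α : ℂ) * (Nat.multinomial Finset.univ β : ℂ)) *
        ∏ k, ((a k:ℂ) * Complex.exp (2 * Real.pi * Complex.I * θ k)) ^ (α k) *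
          ((a k:ℂ) * Complex.exp (-(2 * Real.pi * Complex.I * θ k))) ^ (β k))
      (Measure.pi fun _ : Fin d => volume.restrict (Set.Ioc (0:ℝ) 1)) := by
    intro α β
    exact (integrable_pi_prod (volume.restrict (Set.Ioc (0:ℝ) 1)) (fun k x =>
      ((a k:ℂ) * Complex.exp (2 * Real.pi * Complex.I * x)) ^ (α k) *
        ((a k:ℂ) * Complex.exp (-(2 * Real.pi * Complex.I * x))) ^ (β k))
      (fun k => integrable_h (a k : ℂ) (α k) (β k))).const_mul _
  rw [integral_finset_sum _ (fun α _ => integrable_finset_sum _ (fun β _ => HT α β))]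
  calc ∑ α ∈ Finset.piAntidiag (Finset.univ : Finset (Fin d)) n,
        ∫ θ : Fin d → ℝ, ∑ β ∈ Finset.piAntidiag (Finset.univ : Finset (Fin d)) n,
          ((Nat.multinomial Finset.univ α : ℂ) * (Nat.multinomial Finset.univ β : ℂ)) *
            ∏ k, ((a k:ℂ) * Complex.exp (2 * Real.pi * Complex.I * θ k)) ^ (α k) *
              ((a k:ℂ) * Complex.exp (-(2 * Real.pi * Complex.I * θ k))) ^ (β k)
          ∂(Measure.pi fun _ : Fin d => volume.restrict (Set.Ioc (0:ℝ) 1))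
      = ∑ α ∈ Finset.piAntidiag (Finset.univ : Finset (Fin d)) n,
          ∑ β ∈ Finset.piAntidiag (Finset.univ : Finset (Fin d)) n,
            ((Nat.multinomial Finset.univ α : ℂ) * (Nat.multinomial Finset.univ β : ℂ)) *
              ∏ k, (if α k = β k then (a k:ℂ) ^ (2 * α k) else 0) := by
        refine Finset.sum_congr rfl fun α _ => ?_
        rw [integral_finset_sum _ (fun β _ => HT α β)]
        refine Finset.sum_congr rfl fun β _ => ?_
        rw [MeasureTheory.integral_const_mul,
          integral_pi_prod (volume.restrict (Set.Ioc (0:ℝ) 1)) (fun k x =>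
            ((a k:ℂ) * Complex.exp (2 * Real.pi * Complex.I * x)) ^ (α k) *
              ((a k:ℂ) * Complex.exp (-(2 * Real.pi * Complex.I * x))) ^ (β k))]
        congr 1
        exact Finset.prod_congr rfl fun k _ => integral_h _ _ _
    _ = ∑ α ∈ Finset.piAntidiag (Finset.univ : Finset (Fin d)) n,
          ((Nat.multinomial Finset.univ α : ℂ))^2 * ∏ k, (a k:ℂ) ^ (2 * α k) := by
        refine Finset.sum_congr rfl fun α hα => ?_
        rw [Finset.sum_eq_single_of_mem α hα]
        · simp [sq]
        · intro β _ hβ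
          obtain ⟨k, hk⟩ := Function.ne_iff.mp (Ne.symm hβ)
          have h0 : (if α k = β k then ((a k : ℂ)) ^ (2 * α k) else 0) = 0 := if_neg hk
          exact mul_eq_zero_of_right _ (Finset.prod_eq_zero (Finset.mem_univ k) h0)
    _ = ((∑ α ∈ Finset.piAntidiag (Finset.univ : Finset (Fin d)) n,
          (Nat.multinomial Finset.univ α : ℝ) ^ 2 * ∏ k, a k ^ (2 * α k) : ℝ) : ℂ) := by
        push_cast
        rfl

theorem stmt_6 (d : ℕ) (hd : 1 ≤ d) (n : ℕ) (c : Fin d → ℝ) (hc : ∀ j, 0 < c j) (j : Fin d) :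
    (∑ α ∈ multiIndices d n,
        (Nat.multinomial Finset.univ α : ℝ) ^ 2 * (∏ k, c k ^ (2 * α k)) / (α j + 1))
      = ∫ r in Set.Ioc (0:ℝ) 1,
          (∫ θ in Set.univ.pi fun _ : Fin d => Set.Ioc (0:ℝ) 1,
            ‖∑ k, (if k = j then (r : ℂ) else 1) * (c k : ℂ)
                * Complex.exp (2 * Real.pi * Complex.I * θ k)‖ ^ (2 * n)) * (2 * r) := by
  have h2 : multiIndices d n = Finset.piAntidiag (Finset.univ : Finset (Fin d)) n :=
    multiIndices_eq d n
  rw [h2]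
  symm
  have hb : ∀ (r : ℝ) (k : Fin d), (if k = j then (r:ℂ) else 1) * (c k : ℂ)
      = (((if k = j then r else 1) * c k : ℝ) : ℂ) := by
    intro r k
    split_ifs <;> push_cast <;> ring
  simp only [hb]
  have hinner : ∀ r : ℝ,
      (∫ θ in Set.univ.pi fun _ : Fin d => Set.Ioc (0:ℝ) 1,
        ‖∑ k, ((((if k = j then r else 1) * c k : ℝ)) : ℂ)
            * Complex.exp (2 * Real.pi * Complex.I * θ k)‖ ^ (2 * n))
      = ∑ α ∈ Finset.piAntidiag (Finset.univ : Finset (Fin d)) n,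
          (Nat.multinomial Finset.univ α : ℝ) ^ 2 *
            ∏ k, ((if k = j then r else 1) * c k) ^ (2 * α k) :=
    fun r => inner_integral d n (fun k => (if k = j then r else 1) * c k)
  simp only [hinner]
  have hprod : ∀ (r : ℝ) (α : Fin d → ℕ),
      (∏ k, ((if k = j then r else 1) * c k) ^ (2 * α k))
        = r ^ (2 * α j) * ∏ k, c k ^ (2 * α k) := by
    intro r α
    simp_rw [mul_pow]
    rw [Finset.prod_mul_distrib]
    congr 1
    rw [Finset.prod_eq_single j (fun k _ hk => by rw [if_neg hk, one_pow])
      (fun h => absurd (Finset.mem_univ j) h), if_pos rfl]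
  simp only [hprod]
  simp only [Finset.sum_mul]
  rw [integral_finset_sum _ (fun α _ => ((by fun_prop : Continuous (fun r : ℝ =>
      (Nat.multinomial Finset.univ α : ℝ) ^ 2 * (r ^ (2 * α j) * ∏ k, c k ^ (2 * α k)) *
        (2 * r))).integrableOn_Ioc))]
  refine Finset.sum_congr rfl fun α hα => ?_
  rw [← intervalIntegral.integral_of_le zero_le_one]
  have hre : ∀ r : ℝ, (Nat.multinomial Finset.univ α : ℝ) ^ 2 *
      (r ^ (2 * α j) * ∏ k, c k ^ (2 * α k)) * (2 * r)
      = ((Nat.multinomial Finset.univ α : ℝ) ^ 2 * (∏ k, c k ^ (2 * α k)) * 2) *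
        r ^ (2 * α j + 1) := by
    intro r; ring
  simp_rw [hre]
  rw [intervalIntegral.integral_const_mul, integral_pow]
  have h1 : ((α j : ℝ) + 1) ≠ 0 := by positivity
  have h2' : ((2 * α j + 1 + 1 : ℕ) : ℝ) ≠ 0 := by positivity
  rw [one_pow, zero_pow (by omega : 2 * α j + 1 + 1 ≠ 0)]
  push_cast
  field_simp
  ring
end

section
/- Let n ≥ 0 be an integer and c₁,…,c_d > 0. For fixed j, with A = Σ_{|α|=n} binom(n,α)² c^{2α} and B_{j,k} = (c_j/c_k) Σ_{|α|=n} binom(n,α)² (α_k/(α_j+1)) c^{2α} for k ≠ j, one has A·c_j + Σ_{k≠j} B_{j,k}·c_k = c_j·(n+1)·Σ_{|α|=n} binom(n,α)² c^{2α}/(α_j+1), where binom(n,α) = n!/(α₁!⋯α_d!). -/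
open Finset

theorem stmt_7 (d : ℕ) (n : ℕ) (c : Fin d → ℝ) (hc : ∀ j, 0 < c j) (j : Fin d) :
    (∑ α ∈ multiIndices d n,
        (Nat.multinomial Finset.univ α : ℝ) ^ 2 * ∏ k, c k ^ (2 * α k)) * c j
      + ∑ k ∈ Finset.univ.erase j,
          (c j / c k * ∑ α ∈ multiIndices d n,
            (Nat.multinomial Finset.univ α : ℝ) ^ 2 * ((α k : ℝ) / (α j + 1))
              * ∏ l, c l ^ (2 * α l)) * c k
      = c j * (n + 1) * ∑ α ∈ multiIndices d n,
          (Nat.multinomial Finset.univ α : ℝ) ^ 2 * (∏ l, c l ^ (2 * α l)) / (α j + 1) := by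
  have hc0 : ∀ k, c k ≠ 0 := fun k => (hc k).ne'
  have hstep : ∀ k ∈ Finset.univ.erase j,
      (c j / c k * ∑ α ∈ multiIndices d n,
        (Nat.multinomial Finset.univ α : ℝ) ^ 2 * ((α k : ℝ) / (α j + 1))
          * ∏ l, c l ^ (2 * α l)) * c k
      = c j * ∑ α ∈ multiIndices d n,
        (Nat.multinomial Finset.univ α : ℝ) ^ 2 * ((α k : ℝ) / (α j + 1))
          * ∏ l, c l ^ (2 * α l) := by
    intro k _
    field_simp
    rw [mul_right_comm]
    exact mul_div_cancel_right₀ _ (hc0 k)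
  rw [Finset.sum_congr rfl hstep, ← Finset.mul_sum, mul_comm _ (c j), ← mul_add, mul_assoc]
  congr 1
  rw [Finset.sum_comm, Finset.mul_sum, ← Finset.sum_add_distrib]
  apply Finset.sum_congr rfl
  intro α hα
  have hsum : ∑ k, α k = n := by
    simpa [multiIndices] using (Finset.mem_filter.mp hα).2
  have herase : ∑ k ∈ Finset.univ.erase j, (α k : ℝ) = (n : ℝ) - α j := by
    have h := Finset.sum_erase_add Finset.univ (fun k => (α k : ℝ)) (Finset.mem_univ j)
    have h2 : ∑ k, (α k : ℝ) = (n : ℝ) := by exact_mod_cast congrArg Nat.cast hsum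
    linarith [h]
  have hαj : ((α j : ℝ) + 1) ≠ 0 := by positivity
  rw [← Finset.sum_mul, ← Finset.mul_sum, ← Finset.sum_div, herase]
  field_simp
  ring
end

section
/- For every nonnegative integer n, the quantity Φ(2(n+1)) := ∫_{T³} |ζ₁+ζ₂+ζ₃|^{2n}·(ζ₁+ζ₂+ζ₃)·ζ₁ζ₂·conj(ζ₃)³ dm₃(ζ) equals (n+1)·Σ_{|β|=n} binom(n,β)²·β₁β₂/((β₃+1)(β₃+2)(β₃+3)), where the sum is over multi-indices β ∈ ℕ₀³ with β₁+β₂+β₃ = n. -/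
open MeasureTheory Finset

noncomputable def ee (t : ℝ) : ℂ := Complex.exp (2 * Real.pi * Complex.I * t)

lemma ee_norm (t : ℝ) : ‖ee t‖ = 1 := by
  have : (2 * Real.pi * Complex.I * t : ℂ) = ((2 * Real.pi * t : ℝ) : ℂ) * Complex.I := by
    push_cast; ring
  rw [ee, this, Complex.norm_exp_ofReal_mul_I]

noncomputable def gg (a b : ℕ) (t : ℝ) : ℂ := ee t ^ a * (starRingEnd ℂ) (ee t) ^ b

lemma gg_eq (a b : ℕ) (t : ℝ) :
    gg a b t = Complex.exp ((((a : ℂ) - b) * (2 * Real.pi * Complex.I)) * t) := by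
  rw [gg, ee, ← Complex.exp_conj]
  rw [← Complex.exp_nat_mul, ← Complex.exp_nat_mul, ← Complex.exp_add]
  congr 1
  have : (starRingEnd ℂ) (2 * Real.pi * Complex.I * t) = -(2 * Real.pi * Complex.I * t) := by
    rw [map_mul, map_mul, map_mul, Complex.conj_I, Complex.conj_ofReal, Complex.conj_ofReal,
      map_ofNat]; ring
  rw [this]; ring

lemma gg_cont (a b : ℕ) : Continuous (gg a b) := by
  simp only [funext (gg_eq a b)]
  fun_prop

lemma orth (a b : ℕ) :
    ∫ t in Set.Ioc (0:ℝ) 1, gg a b t = if a = b then 1 else 0 := by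
  simp only [funext (gg_eq a b)]
  rw [← intervalIntegral.integral_of_le (zero_le_one)]
  by_cases h : a = b
  · subst h; simp
  · rw [if_neg h]
    have hk : ((a : ℂ) - b) ≠ 0 := by
      intro hc
      exact h (by exact_mod_cast sub_eq_zero.mp hc)
    have hc : ((a : ℂ) - b) * (2 * Real.pi * Complex.I) ≠ 0 := by
      apply mul_ne_zero hk
      simp [Real.pi_ne_zero, Complex.I_ne_zero]
    rw [integral_exp_mul_complex hc]
    have : ((a : ℂ) - b) = ((a - b : ℤ) : ℂ) := by push_cast; ring
    have h1 : ((↑a - ↑b : ℂ)) * (2 * Real.pi * Complex.I) * (1:ℝ) = ((a - b : ℤ) : ℂ) * (2 * Real.pi * Complex.I) := by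
      push_cast; ring
    have h0 : ((↑a - ↑b : ℂ)) * (2 * Real.pi * Complex.I) * (0:ℝ) = 0 := by push_cast; ring
    rw [h1, h0, Complex.exp_int_mul_two_pi_mul_I, Complex.exp_zero]
    simp

lemma indicator_pi (f : Fin 3 → ℝ → ℂ) (θ : Fin 3 → ℝ) :
    (Set.univ.pi fun _ : Fin 3 => Set.Ioc (0:ℝ) 1).indicator
      (fun θ => ∏ j, f j (θ j)) θ = ∏ j, (Set.Ioc (0:ℝ) 1).indicator (f j) (θ j) := by
  by_cases h : θ ∈ Set.univ.pi fun _ : Fin 3 => Set.Ioc (0:ℝ) 1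
  · rw [Set.indicator_of_mem h]
    exact Finset.prod_congr rfl fun j _ =>
      (Set.indicator_of_mem (h j (Set.mem_univ j)) _).symm
  · rw [Set.indicator_of_notMem h]
    rw [Set.mem_univ_pi] at h
    push_neg at h
    obtain ⟨j, hj⟩ := h
    exact (Finset.prod_eq_zero (Finset.mem_univ j)
      (Set.indicator_of_notMem hj _)).symm

lemma fub (f : Fin 3 → ℝ → ℂ) :
    (∫ θ in Set.univ.pi fun _ : Fin 3 => Set.Ioc (0:ℝ) 1, ∏ j, f j (θ j))
      = ∏ j, ∫ t in Set.Ioc (0:ℝ) 1, f j t := by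
  rw [← MeasureTheory.integral_indicator (MeasurableSet.univ_pi fun _ => measurableSet_Ioc)]
  simp_rw [indicator_pi f]
  rw [MeasureTheory.integral_fintype_prod_volume_eq_prod
    (fun j => (Set.Ioc (0:ℝ) 1).indicator (f j))]
  exact Finset.prod_congr rfl fun j _ =>
    MeasureTheory.integral_indicator measurableSet_Ioc

lemma vol_pi : MeasureTheory.volume (Set.univ.pi fun _ : Fin 3 => Set.Ioc (0:ℝ) 1) = 1 := by
  rw [MeasureTheory.volume_pi_pi]
  simp [Real.volume_Ioc]

lemma intg (a b : Fin 3 → ℕ) :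
    IntegrableOn (fun θ : Fin 3 → ℝ => ∏ j, gg (a j) (b j) (θ j))
      (Set.univ.pi fun _ : Fin 3 => Set.Ioc (0:ℝ) 1) := by
  have hcont : Continuous (fun θ : Fin 3 → ℝ => ∏ j, gg (a j) (b j) (θ j)) :=
    continuous_finset_prod _ fun j _ => (gg_cont (a j) (b j)).comp (continuous_apply j)
  refine MeasureTheory.Integrable.mono' (g := fun _ => (1:ℝ)) ?_ ?_ ?_
  · rw [← MeasureTheory.IntegrableOn, integrableOn_const_iff]
    right; rw [vol_pi]; exact ENNReal.one_lt_top
  · exact hcont.aestronglyMeasurable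
  · filter_upwards with θ
    rw [norm_prod]
    calc ∏ j, ‖gg (a j) (b j) (θ j)‖ ≤ ∏ j, 1 := by
          refine Finset.prod_le_prod (fun j _ => norm_nonneg _) fun j _ => ?_
          rw [gg, norm_mul, norm_pow, norm_pow, RCLike.norm_conj, ee_norm]
          simp
      _ = 1 := by simp

/-- The multi-indices `β : Fin 3 → ℕ` with `|β| = n`, as a finset. -/
def multiIndices3 (n : ℕ) : Finset (Fin 3 → ℕ) :=
  (Fintype.piFinset fun _ : Fin 3 => Finset.range (n + 1)).filter fun β => ∑ j, β j = n

lemma mi_eq (n : ℕ) : multiIndices3 n = Finset.piAntidiag Finset.univ n := by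
  ext β
  simp only [multiIndices3, Finset.mem_filter, Fintype.mem_piFinset, Finset.mem_range,
    Finset.mem_piAntidiag]
  constructor
  · rintro ⟨-, h⟩; exact ⟨h, fun i _ => Finset.mem_univ i⟩
  · rintro ⟨h, -⟩
    refine ⟨fun j => ?_, h⟩
    have h2 := Finset.single_le_sum (f := β) (fun i _ => Nat.zero_le _) (Finset.mem_univ j)
    rw [h] at h2
    omega

def AA (β : Fin 3 → ℕ) : Fin 3 → ℕ := ![β 0 - 1, β 1 - 1, β 2 + 3]

lemma key (n : ℕ) (β : Fin 3 → ℕ) (hs : β 0 + β 1 + β 2 = n) (h0 : 1 ≤ β 0) (h1 : 1 ≤ β 1) :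
    (β 2 + 1) * (β 2 + 2) * (β 2 + 3) * Nat.multinomial Finset.univ (AA β)
      = (n + 1) * β 0 * β 1 * Nat.multinomial Finset.univ β := by
  have hP : 0 < (β 0 - 1).factorial * (β 1 - 1).factorial * (β 2 + 3).factorial := by
    positivity
  apply Nat.eq_of_mul_eq_mul_right hP
  have specA := Nat.multinomial_spec (Finset.univ : Finset (Fin 3)) (AA β)
  have specB := Nat.multinomial_spec (Finset.univ : Finset (Fin 3)) β
  rw [Fin.prod_univ_three, Fin.sum_univ_three] at specA specB
  have hA0 : AA β 0 = β 0 - 1 := rfl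
  have hA1 : AA β 1 = β 1 - 1 := rfl
  have hA2 : AA β 2 = β 2 + 3 := rfl
  rw [hA0, hA1, hA2] at specA
  have hsumA : β 0 - 1 + (β 1 - 1) + (β 2 + 3) = n + 1 := by omega
  rw [hsumA] at specA
  rw [hs] at specB
  have e0 : β 0 * (β 0 - 1).factorial = (β 0).factorial := Nat.mul_factorial_pred (by omega)
  have e1 : β 1 * (β 1 - 1).factorial = (β 1).factorial := Nat.mul_factorial_pred (by omega)
  have e2 : (β 2 + 3).factorial = (β 2 + 3) * ((β 2 + 2) * ((β 2 + 1) * (β 2).factorial)) := by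
    rw [show β 2 + 3 = β 2 + 2 + 1 from rfl, Nat.factorial_succ,
      show β 2 + 2 = β 2 + 1 + 1 from rfl, Nat.factorial_succ, Nat.factorial_succ]
  calc (β 2 + 1) * (β 2 + 2) * (β 2 + 3) * Nat.multinomial Finset.univ (AA β) *
        ((β 0 - 1).factorial * (β 1 - 1).factorial * (β 2 + 3).factorial)
      = (β 2 + 1) * (β 2 + 2) * (β 2 + 3) *
        ((β 0 - 1).factorial * (β 1 - 1).factorial * (β 2 + 3).factorial *
          Nat.multinomial Finset.univ (AA β)) := by ring
    _ = (β 2 + 1) * (β 2 + 2) * (β 2 + 3) * ((n + 1) * n.factorial) := by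
        rw [specA, Nat.factorial_succ]
    _ = (n + 1) * (β 2 + 1) * (β 2 + 2) * (β 2 + 3) *
        ((β 0).factorial * (β 1).factorial * (β 2).factorial * Nat.multinomial Finset.univ β) := by
        rw [specB]; ring
    _ = (n + 1) * β 0 * β 1 * Nat.multinomial Finset.univ β *
        ((β 0 - 1).factorial * (β 1 - 1).factorial * (β 2 + 3).factorial) := by
        rw [← e0, ← e1, e2]; ring

def ccc : Fin 3 → ℕ := ![1, 1, 0]
def ddd : Fin 3 → ℕ := ![0, 0, 3]

lemma pointwise (n : ℕ) (θ : Fin 3 → ℝ) :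
    ((‖∑ j, Complex.exp (2 * Real.pi * Complex.I * θ j)‖ ^ (2 * n) : ℝ) : ℂ)
        * (∑ j, Complex.exp (2 * Real.pi * Complex.I * θ j))
        * Complex.exp (2 * Real.pi * Complex.I * θ 0)
        * Complex.exp (2 * Real.pi * Complex.I * θ 1)
        * (starRingEnd ℂ) (Complex.exp (2 * Real.pi * Complex.I * θ 2)) ^ 3
      = ∑ α ∈ Finset.piAntidiag Finset.univ (n+1), ∑ β ∈ Finset.piAntidiag Finset.univ n,
          ((Nat.multinomial Finset.univ α : ℂ) * (Nat.multinomial Finset.univ β : ℂ)) *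
            ∏ j, gg (α j + ccc j) (β j + ddd j) (θ j) := by
  show ((‖∑ j, ee (θ j)‖ ^ (2 * n) : ℝ) : ℂ) * (∑ j, ee (θ j)) * ee (θ 0) * ee (θ 1)
      * (starRingEnd ℂ) (ee (θ 2)) ^ 3 = _
  set S := ∑ j : Fin 3, ee (θ j) with hSdef
  have h1 : ((‖S‖ ^ (2 * n) : ℝ) : ℂ) = S ^ n * ((starRingEnd ℂ) S) ^ n := by
    push_cast
    rw [pow_mul, ← mul_pow]
    congr 1
    rw [Complex.mul_conj, Complex.normSq_eq_norm_sq]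
    push_cast
    ring
  calc ((‖S‖ ^ (2 * n) : ℝ) : ℂ) * S * ee (θ 0) * ee (θ 1) * (starRingEnd ℂ) (ee (θ 2)) ^ 3
      = S ^ (n+1) * ((starRingEnd ℂ) S) ^ n * ee (θ 0) * ee (θ 1)
          * ((starRingEnd ℂ) (ee (θ 2))) ^ 3 := by rw [h1]; ring
    _ = (∑ α ∈ Finset.piAntidiag Finset.univ (n+1),
            (Nat.multinomial Finset.univ α : ℂ) * ∏ j, ee (θ j) ^ α j)
        * (∑ β ∈ Finset.piAntidiag Finset.univ n,
            (Nat.multinomial Finset.univ β : ℂ) * ∏ j, ((starRingEnd ℂ) (ee (θ j))) ^ β j)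
        * ee (θ 0) * ee (θ 1) * ((starRingEnd ℂ) (ee (θ 2))) ^ 3 := by
        rw [hSdef, Finset.sum_pow_eq_sum_piAntidiag, map_sum,
          Finset.sum_pow_eq_sum_piAntidiag]
    _ = _ := by
        rw [Finset.sum_mul_sum]
        simp only [Finset.sum_mul]
        refine Finset.sum_congr rfl fun α _ => Finset.sum_congr rfl fun β _ => ?_
        simp only [Fin.prod_univ_three, gg, pow_add,
          show ccc 0 = 1 from rfl, show ccc 1 = 1 from rfl, show ccc 2 = 0 from rfl,
          show ddd 0 = 0 from rfl, show ddd 1 = 0 from rfl, show ddd 2 = 3 from rfl,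
          pow_zero, pow_one]
        ring

theorem stmt_10 (n : ℕ) :
    (∫ θ in Set.univ.pi fun _ : Fin 3 => Set.Ioc (0:ℝ) 1,
        ((‖∑ j, Complex.exp (2 * Real.pi * Complex.I * θ j)‖ ^ (2 * n) : ℝ) : ℂ)
          * (∑ j, Complex.exp (2 * Real.pi * Complex.I * θ j))
          * Complex.exp (2 * Real.pi * Complex.I * θ 0)
          * Complex.exp (2 * Real.pi * Complex.I * θ 1)
          * (starRingEnd ℂ) (Complex.exp (2 * Real.pi * Complex.I * θ 2)) ^ 3)
      = Complex.ofReal ((n + 1 : ℝ) * ∑ β ∈ multiIndices3 n,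
          (Nat.multinomial Finset.univ β : ℝ) ^ 2 * (β 0 : ℝ) * (β 1 : ℝ)
            / (((β 2 : ℝ) + 1) * ((β 2 : ℝ) + 2) * ((β 2 : ℝ) + 3))) := by
  classical
  simp only [pointwise n]
  rw [MeasureTheory.integral_finset_sum _ (fun α _ =>
    MeasureTheory.integrable_finset_sum _ fun β _ => (intg _ _).const_mul _)]
  calc (∑ α ∈ Finset.piAntidiag Finset.univ (n+1),
          ∫ θ in Set.univ.pi fun _ : Fin 3 => Set.Ioc (0:ℝ) 1,
            ∑ β ∈ Finset.piAntidiag Finset.univ n,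
              ((Nat.multinomial Finset.univ α : ℂ) * (Nat.multinomial Finset.univ β : ℂ)) *
                ∏ j, gg (α j + ccc j) (β j + ddd j) (θ j))
      = ∑ α ∈ Finset.piAntidiag Finset.univ (n+1), ∑ β ∈ Finset.piAntidiag Finset.univ n,
          ((Nat.multinomial Finset.univ α : ℂ) * (Nat.multinomial Finset.univ β : ℂ)) *
            (if ∀ j, α j + ccc j = β j + ddd j then (1:ℂ) else 0) := by
        refine Finset.sum_congr rfl fun α _ => ?_
        rw [MeasureTheory.integral_finset_sum _ (fun β _ => (intg _ _).const_mul _)]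
        refine Finset.sum_congr rfl fun β _ => ?_
        rw [MeasureTheory.integral_const_mul, fub]
        congr 1
        calc ∏ j, ∫ t in Set.Ioc (0:ℝ) 1, gg (α j + ccc j) (β j + ddd j) t
            = ∏ j, if α j + ccc j = β j + ddd j then (1:ℂ) else 0 :=
              Finset.prod_congr rfl fun j _ => orth _ _
          _ = _ := by
              rw [Fintype.prod_boole]
              congr
    _ = _ := by
        rw [Finset.sum_comm, mi_eq, Finset.mul_sum, Complex.ofReal_sum]
        refine Finset.sum_congr rfl fun β hβ => ?_
        rw [Finset.mem_piAntidiag] at hβ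
        have hsum : β 0 + β 1 + β 2 = n := by
          rw [← hβ.1, Fin.sum_univ_three]
        simp only [mul_ite, mul_one, mul_zero]
        by_cases hb : 1 ≤ β 0 ∧ 1 ≤ β 1
        · have hiff : ∀ α : Fin 3 → ℕ, (∀ j, α j + ccc j = β j + ddd j) ↔ α = AA β := by
            intro α
            constructor
            · intro h
              have h0 := h 0; have h1 := h 1; have h2 := h 2
              simp only [show ccc 0 = 1 from rfl, show ccc 1 = 1 from rfl,
                show ccc 2 = 0 from rfl, show ddd 0 = 0 from rfl, show ddd 1 = 0 from rfl,
                show ddd 2 = 3 from rfl] at h0 h1 h2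
              funext j
              fin_cases j
              · show α 0 = β 0 - 1; omega
              · show α 1 = β 1 - 1; omega
              · show α 2 = β 2 + 3; omega
            · rintro rfl j
              fin_cases j
              · show β 0 - 1 + ccc 0 = β 0 + ddd 0
                simp only [show ccc 0 = 1 from rfl, show ddd 0 = 0 from rfl]; omega
              · show β 1 - 1 + ccc 1 = β 1 + ddd 1
                simp only [show ccc 1 = 1 from rfl, show ddd 1 = 0 from rfl]; omega
              · show β 2 + 3 + ccc 2 = β 2 + ddd 2
                simp only [show ccc 2 = 0 from rfl, show ddd 2 = 3 from rfl]
          simp only [hiff]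
          rw [Finset.sum_ite_eq' (Finset.piAntidiag Finset.univ (n+1)) (AA β)]
          have hmem : AA β ∈ Finset.piAntidiag Finset.univ (n+1) := by
            rw [Finset.mem_piAntidiag]
            refine ⟨?_, fun i _ => Finset.mem_univ i⟩
            rw [Fin.sum_univ_three]
            show β 0 - 1 + (β 1 - 1) + (β 2 + 3) = n + 1
            omega
          rw [if_pos hmem]
          have hkey := key n β hsum hb.1 hb.2
          have hD : ((β 2 : ℝ) + 1) * ((β 2 : ℝ) + 2) * ((β 2 : ℝ) + 3) ≠ 0 := by positivity
          have hcast := congrArg (Nat.cast (R := ℝ)) hkey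
          push_cast at hcast
          have hR : (Nat.multinomial Finset.univ (AA β) : ℝ) *
              (Nat.multinomial Finset.univ β : ℝ)
              = (↑n + 1) * ((Nat.multinomial Finset.univ β : ℝ) ^ 2 * (β 0 : ℝ) * (β 1 : ℝ)
                / (((β 2 : ℝ) + 1) * ((β 2 : ℝ) + 2) * ((β 2 : ℝ) + 3))) := by
            field_simp
            linear_combination (Nat.multinomial Finset.univ β : ℝ) * hcast
          rw [← Complex.ofReal_natCast, ← Complex.ofReal_natCast, ← Complex.ofReal_mul, hR,
            Complex.ofReal_mul]
        · trans (0 : ℂ)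
          · refine Finset.sum_eq_zero fun α hα => ?_
            rw [if_neg]
            intro hcond
            have h0 := hcond 0; have h1 := hcond 1
            simp only [show ccc 0 = 1 from rfl, show ccc 1 = 1 from rfl,
              show ddd 0 = 0 from rfl, show ddd 1 = 0 from rfl] at h0 h1
            omega
          · have hz : β 0 = 0 ∨ β 1 = 0 := by omega
            rcases hz with hz | hz <;> simp [hz]
end

section
/- For every integer n ≥ 2, (n+1)·Σ_{|β|=n} binom(n,β)²·β₁β₂/((β₃+1)(β₃+2)(β₃+3)) = ((n+1)·n²·(n−1)²/6) · ∫_{D³} |w₁+w₂+w₃|^{2(n−2)} · 3(1−|w₃|²)² dA₃(w), where D is the unit disc and dA₃ is the product of normalized area measures on D (each with total mass 1). -/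
open MeasureTheory Finset

/-- The normalized area measure on `ℂ`, giving the unit disc total mass `1`. -/
noncomputable def discMeasure : Measure ℂ := (ENNReal.ofReal Real.pi)⁻¹ • volume

open Metric Complex

section Helpers

lemma integrableOn_ball_of_continuous {E : Type*} [NormedAddCommGroup E]
    (f : ℂ → E) (hf : Continuous f) : IntegrableOn f (ball (0:ℂ) 1) volume :=
  (hf.continuousOn.integrableOn_compact (isCompact_closedBall 0 1)).mono_set
    ball_subset_closedBall

lemma integral_ball_norm_pow (p : ℕ) :
    ∫ w in ball (0:ℂ) 1, ‖w‖ ^ p ∂volume = 2 * Real.pi / (p + 2) := by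
  have key : ∀ w : ℂ, Set.indicator (ball (0:ℂ) 1) (fun w => ‖w‖ ^ p) w
      = Set.indicator (Set.Iio (1:ℝ)) (fun y => y ^ p) ‖w‖ := by
    intro w
    by_cases h : w ∈ ball (0:ℂ) 1
    · rw [Set.indicator_of_mem h, Set.indicator_of_mem (by simpa [mem_ball_zero_iff] using h)]
    · rw [Set.indicator_of_notMem h,
        Set.indicator_of_notMem (by simpa [mem_ball_zero_iff] using h)]
  rw [← integral_indicator measurableSet_ball]
  calc ∫ w : ℂ, Set.indicator (ball (0:ℂ) 1) (fun w => ‖w‖ ^ p) w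
      = ∫ w : ℂ, Set.indicator (Set.Iio (1:ℝ)) (fun y => y ^ p) ‖w‖ :=
        integral_congr_ae (Filter.Eventually.of_forall key)
    _ = 2 * Real.pi / (p + 2) := by
        rw [integral_fun_norm_addHaar volume (Set.indicator (Set.Iio (1:ℝ)) (fun y => y ^ p))]
        have h1 : (volume (ball (0:ℂ) 1)).toReal = Real.pi := by
          simp [Complex.volume_ball]
        have h2 : ∀ y : ℝ, y ^ (Module.finrank ℝ ℂ - 1) •
            Set.indicator (Set.Iio (1:ℝ)) (fun y => y ^ p) y
            = Set.indicator (Set.Iio (1:ℝ)) (fun y => y ^ (p+1)) y := by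
          intro y
          rw [finrank_real_complex]
          by_cases h : y ∈ Set.Iio (1:ℝ)
          · rw [Set.indicator_of_mem h, Set.indicator_of_mem h]; simp; ring
          · rw [Set.indicator_of_notMem h, Set.indicator_of_notMem h]; simp
        have h3 : ∫ y in Set.Ioi (0:ℝ), Set.indicator (Set.Iio (1:ℝ)) (fun y => y ^ (p+1)) y
            = (p + 2 : ℝ)⁻¹ := by
          rw [integral_indicator measurableSet_Iio, Measure.restrict_restrict measurableSet_Iio]
          rw [show Set.Iio (1:ℝ) ∩ Set.Ioi 0 = Set.Ioo 0 1 by ext x; simp [and_comm]]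
          rw [← MeasureTheory.integral_Ioc_eq_integral_Ioo,
            ← intervalIntegral.integral_of_le zero_le_one]
          rw [integral_pow]
          push_cast; ring
        rw [finrank_real_complex] at *
        rw [← measureReal_def] at h1
        simp only [h2, h3, h1, smul_eq_mul]
        push_cast
        field_simp
        simp only [smul_eq_mul, nsmul_eq_mul, Nat.cast_ofNat]
        field_simp

lemma integral_ball_monomial_ne (j k : ℕ) (h : j ≠ k) :
    ∫ w in ball (0:ℂ) 1, w ^ j * (starRingEnd ℂ w) ^ k ∂volume = 0 := by
  set d : ℤ := (j : ℤ) - k with hd_def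
  have hdz : d ≠ 0 := sub_ne_zero.mpr (by exact_mod_cast h)
  have hd0 : (((d : ℝ)) : ℂ) ≠ 0 := by exact_mod_cast (Int.cast_ne_zero (α := ℝ)).mpr hdz
  set θ : ℝ := Real.pi / (d : ℝ) with hθ_def
  set a : Circle := Circle.exp θ with ha_def
  have hmp := (rotation a).measurePreserving
  have hemb : MeasurableEmbedding (rotation a) :=
    (rotation a).toHomeomorph.measurableEmbedding
  have hpre : (rotation a) ⁻¹' (ball (0:ℂ) 1) = ball (0:ℂ) 1 := by
    ext w
    simp [mem_ball_zero_iff, rotation_apply, norm_mul, map_zero, dist_zero_right,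
      Complex.dist_eq]
  have key := hmp.setIntegral_preimage_emb hemb
    (fun w => w ^ j * (starRingEnd ℂ w) ^ k) (ball (0:ℂ) 1)
  rw [hpre] at key
  have haa : (a : ℂ) = Complex.exp ((θ : ℂ) * Complex.I) := Circle.coe_exp _
  have hfac : (a : ℂ) ^ j * (starRingEnd ℂ (a : ℂ)) ^ k = Complex.exp (Real.pi * Complex.I) := by
    rw [haa, ← Complex.exp_conj]
    have hconj : (starRingEnd ℂ) ((θ : ℂ) * Complex.I) = -((θ : ℂ) * Complex.I) := by
      rw [map_mul, Complex.conj_I, Complex.conj_ofReal]; ring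
    rw [hconj, ← Complex.exp_nat_mul, ← Complex.exp_nat_mul, ← Complex.exp_add]
    congr 1
    have hjk : (j : ℂ) - k = ((d : ℝ) : ℂ) := by push_cast [hd_def]; ring
    have hθc : (θ : ℂ) = (Real.pi : ℂ) / ((d : ℝ) : ℂ) := by
      rw [hθ_def]; push_cast; ring
    have hmain : ((j:ℂ) - k) * (θ:ℂ) = (Real.pi : ℂ) := by
      rw [hjk, hθc]
      have hd0' : ((d:ℤ):ℂ) ≠ 0 := Int.cast_ne_zero.mpr hdz
      field_simp [hd0, hd0']
    linear_combination Complex.I * hmain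
  have hc : ∀ w : ℂ, (rotation a w) ^ j * (starRingEnd ℂ (rotation a w)) ^ k
      = Complex.exp (Real.pi * Complex.I) * (w ^ j * (starRingEnd ℂ w) ^ k) := by
    intro w
    rw [rotation_apply, map_mul, mul_pow, mul_pow, ← hfac]
    ring
  simp only [hc] at key
  rw [integral_const_mul, Complex.exp_pi_mul_I] at key
  have h2 : (2 : ℂ) * ∫ w in ball (0:ℂ) 1, w ^ j * (starRingEnd ℂ w) ^ k ∂volume = 0 := by
    linear_combination -key
  exact (mul_eq_zero.mp h2).resolve_left two_ne_zero

lemma norm_sq_pow_eq (z : ℂ) (e : ℕ) :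
    z ^ e * (starRingEnd ℂ z) ^ e = ((‖z‖ ^ (2 * e) : ℝ) : ℂ) := by
  rw [← mul_pow, Complex.mul_conj, Complex.normSq_eq_norm_sq]
  push_cast
  rw [← pow_mul]

lemma integral_ball_monomial_diag (j : ℕ) :
    ∫ w in ball (0:ℂ) 1, w ^ j * (starRingEnd ℂ w) ^ j ∂volume
      = ((Real.pi / (j + 1) : ℝ) : ℂ) := by
  have key : ∀ w : ℂ, w ^ j * (starRingEnd ℂ w) ^ j = ((‖w‖ ^ (2 * j) : ℝ) : ℂ) :=
    fun w => norm_sq_pow_eq w j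
  simp only [key]
  have h := integral_ofReal (𝕜 := ℂ) (μ := volume.restrict (ball (0:ℂ) 1))
    (f := fun x : ℂ => ‖x‖^(2*j))
  rw [show (RCLike.ofReal : ℝ → ℂ) = Complex.ofReal from rfl] at h
  rw [h, integral_ball_norm_pow, Complex.ofReal_inj]
  rw [div_eq_div_iff (by positivity) (by positivity)]
  push_cast
  ring

lemma integral_ball_monomial (i k : ℕ) :
    ∫ w in ball (0:ℂ) 1, w ^ i * (starRingEnd ℂ w) ^ k ∂volume
      = if i = k then ((Real.pi / (i + 1) : ℝ) : ℂ) else 0 := by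
  by_cases h : i = k
  · subst h; rw [if_pos rfl]; exact integral_ball_monomial_diag i
  · rw [if_neg h]; exact integral_ball_monomial_ne i k h

lemma integral_ball_add_pow (m : ℕ) (z : ℂ) :
    ∫ w in ball (0:ℂ) 1, ‖w + z‖ ^ (2 * m) ∂volume
      = ∑ k ∈ range (m+1), (m.choose k : ℝ)^2 * ‖z‖^(2*(m-k)) * (Real.pi / (k+1)) := by
  set c : ℕ → ℕ → ℂ := fun i k =>
    ((m.choose i : ℂ) * z ^ (m - i)) * ((m.choose k : ℂ) * (starRingEnd ℂ z) ^ (m - k)) with hc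
  have expand : ∀ w : ℂ, ((‖w + z‖ ^ (2 * m) : ℝ) : ℂ)
      = ∑ i ∈ range (m+1), ∑ k ∈ range (m+1), c i k * (w ^ i * (starRingEnd ℂ w) ^ k) := by
    intro w
    rw [← norm_sq_pow_eq (w + z) m, add_pow, map_add, add_pow, Finset.sum_mul_sum]
    refine Finset.sum_congr rfl fun i _ => Finset.sum_congr rfl fun k _ => ?_
    simp only [hc]
    push_cast
    ring
  have hofReal := integral_ofReal (𝕜 := ℂ) (μ := volume.restrict (ball (0:ℂ) 1))
    (f := fun w : ℂ => ‖w + z‖ ^ (2*m))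
  rw [show (RCLike.ofReal : ℝ → ℂ) = Complex.ofReal from rfl] at hofReal
  have hint : ∀ i k : ℕ, IntegrableOn (fun w : ℂ => c i k * (w ^ i * (starRingEnd ℂ w) ^ k))
      (ball (0:ℂ) 1) volume := by
    intro i k
    refine (integrableOn_ball_of_continuous (fun w : ℂ => w ^ i * (starRingEnd ℂ w) ^ k) ?_).const_mul _
    exact (continuous_pow i).mul ((Complex.continuous_conj).pow k)
  have key : (((∑ k ∈ range (m+1), (m.choose k : ℝ)^2 * ‖z‖^(2*(m-k)) * (Real.pi / (k+1))) : ℝ) : ℂ)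
      = ∫ w in ball (0:ℂ) 1, ((‖w + z‖ ^ (2 * m) : ℝ) : ℂ) ∂volume := by
    calc (((∑ k ∈ range (m+1), (m.choose k : ℝ)^2 * ‖z‖^(2*(m-k)) * (Real.pi / (k+1))) : ℝ) : ℂ)
        = ∑ i ∈ range (m+1), ∑ k ∈ range (m+1),
            c i k * (if i = k then ((Real.pi / (i + 1) : ℝ) : ℂ) else 0) := by
          push_cast
          refine Finset.sum_congr rfl fun i hi => ?_
          rw [Finset.sum_eq_single i (fun b _ hb => by rw [if_neg (fun hh => hb hh.symm), mul_zero])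
            (fun hi' => absurd hi hi')]
          rw [if_pos rfl]
          have hzz := norm_sq_pow_eq z (m - i)
          push_cast at hzz
          simp only [hc]
          linear_combination -((m.choose i : ℂ))^2 * ((Real.pi:ℂ)/((i:ℂ)+1)) * hzz
      _ = ∑ i ∈ range (m+1), ∑ k ∈ range (m+1),
            c i k * ∫ w in ball (0:ℂ) 1, w ^ i * (starRingEnd ℂ w) ^ k ∂volume := by
          refine Finset.sum_congr rfl fun i _ => Finset.sum_congr rfl fun k _ => ?_
          rw [integral_ball_monomial]
      _ = ∫ w in ball (0:ℂ) 1, ∑ i ∈ range (m+1), ∑ k ∈ range (m+1),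
            c i k * (w ^ i * (starRingEnd ℂ w) ^ k) ∂volume := by
          rw [integral_finset_sum _ (fun i _ => integrable_finset_sum _ (fun k _ => hint i k))]
          refine Finset.sum_congr rfl fun i _ => ?_
          rw [integral_finset_sum _ (fun k _ => hint i k)]
          refine Finset.sum_congr rfl fun k _ => ?_
          rw [integral_const_mul]
      _ = ∫ w in ball (0:ℂ) 1, ((‖w + z‖ ^ (2 * m) : ℝ) : ℂ) ∂volume := by
          refine integral_congr_ae (Filter.Eventually.of_forall fun w => ?_)
          exact (expand w).symm
  rw [hofReal] at key
  exact_mod_cast key.symm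

lemma discMeasure_integral (f : ℂ → ℝ) :
    ∫ w in ball (0:ℂ) 1, f w ∂discMeasure
      = Real.pi⁻¹ * ∫ w in ball (0:ℂ) 1, f w ∂volume := by
  rw [discMeasure, Measure.restrict_smul, integral_smul_measure, ENNReal.toReal_inv,
    ENNReal.toReal_ofReal Real.pi_pos.le, smul_eq_mul]

lemma integrableOn_disc_of_continuous {E : Type*} [NormedAddCommGroup E]
    (f : ℂ → E) (hf : Continuous f) : IntegrableOn f (ball (0:ℂ) 1) discMeasure := by
  rw [discMeasure, IntegrableOn, Measure.restrict_smul]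
  refine (integrableOn_ball_of_continuous f hf).smul_measure (c := (ENNReal.ofReal Real.pi)⁻¹) ?_
  rw [ENNReal.inv_ne_top, Ne, ENNReal.ofReal_eq_zero, not_le]
  exact Real.pi_pos

lemma disc_norm_pow (p : ℕ) :
    ∫ w in ball (0:ℂ) 1, ‖w‖ ^ p ∂discMeasure = 2 / (p + 2) := by
  rw [discMeasure_integral, integral_ball_norm_pow]
  field_simp [Real.pi_ne_zero]

lemma disc_add_pow (m : ℕ) (z : ℂ) (C : ℝ) :
    ∫ w in ball (0:ℂ) 1, ‖w + z‖ ^ (2 * m) * C ∂discMeasure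
      = C * ∑ k ∈ range (m+1), (m.choose k : ℝ)^2 / (k+1) * ‖z‖^(2*(m-k)) := by
  rw [integral_mul_const, discMeasure_integral, integral_ball_add_pow, Finset.mul_sum,
    Finset.sum_mul, Finset.mul_sum]
  refine Finset.sum_congr rfl fun k _ => ?_
  field_simp [Real.pi_ne_zero]

lemma disc_weight (s : ℕ) :
    ∫ w in ball (0:ℂ) 1, ‖w‖ ^ (2 * s) * (3 * (1 - ‖w‖ ^ 2) ^ 2) ∂discMeasure
      = 6 / (((s:ℝ) + 1) * ((s:ℝ) + 2) * ((s:ℝ) + 3)) := by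
  have hexp : ∀ w : ℂ, ‖w‖ ^ (2 * s) * (3 * (1 - ‖w‖ ^ 2) ^ 2)
      = 3 * ‖w‖ ^ (2*s) - 6 * ‖w‖ ^ (2*s+2) + 3 * ‖w‖ ^ (2*s+4) := by
    intro w; ring
  have hi : ∀ p : ℕ, IntegrableOn (fun w : ℂ => ‖w‖ ^ p) (ball (0:ℂ) 1) discMeasure :=
    fun p => integrableOn_disc_of_continuous _ (continuous_norm.pow p)
  calc ∫ w in ball (0:ℂ) 1, ‖w‖ ^ (2 * s) * (3 * (1 - ‖w‖ ^ 2) ^ 2) ∂discMeasure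
      = ∫ w in ball (0:ℂ) 1,
          (3 * ‖w‖ ^ (2*s) - 6 * ‖w‖ ^ (2*s+2) + 3 * ‖w‖ ^ (2*s+4)) ∂discMeasure :=
        integral_congr_ae (Filter.Eventually.of_forall fun w => hexp w)
    _ = 3 * (2 / ((2*s:ℕ) + 2)) - 6 * (2 / ((2*s+2:ℕ) + 2)) + 3 * (2 / ((2*s+4:ℕ) + 2)) := by
        have h1 : IntegrableOn (fun w : ℂ => 3 * ‖w‖ ^ (2*s)) (ball (0:ℂ) 1) discMeasure :=
          (hi _).const_mul 3
        have h2 : IntegrableOn (fun w : ℂ => 6 * ‖w‖ ^ (2*s+2)) (ball (0:ℂ) 1) discMeasure :=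
          (hi _).const_mul 6
        have h3 : IntegrableOn (fun w : ℂ => 3 * ‖w‖ ^ (2*s+4)) (ball (0:ℂ) 1) discMeasure :=
          (hi _).const_mul 3
        have h12 : IntegrableOn (fun w : ℂ => 3 * ‖w‖ ^ (2*s) - 6 * ‖w‖ ^ (2*s+2))
            (ball (0:ℂ) 1) discMeasure := h1.sub h2
        rw [integral_add h12 h3, integral_sub h1 h2,
          integral_const_mul, integral_const_mul, integral_const_mul,
          disc_norm_pow, disc_norm_pow, disc_norm_pow]
    _ = 6 / (((s:ℝ) + 1) * ((s:ℝ) + 2) * ((s:ℝ) + 3)) := by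
        push_cast
        have h1 : (2*(s:ℝ) + 2) ≠ 0 := by positivity
        have h2 : (2*(s:ℝ) + 2 + 2) ≠ 0 := by positivity
        have h3 : (2*(s:ℝ) + 4 + 2) ≠ 0 := by positivity
        field_simp
        ring

/-- The common double sum. -/
noncomputable def Sm (m : ℕ) : ℝ :=
  ∑ k ∈ range (m+1), ∑ j ∈ range (m-k+1),
    (m.choose k : ℝ)^2/((k:ℝ)+1) * (((m-k).choose j : ℝ)^2/((j:ℝ)+1))
      * (6/(((((m-k-j:ℕ)):ℝ)+1) * ((((m-k-j:ℕ)):ℝ)+2) * ((((m-k-j:ℕ)):ℝ)+3)))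

lemma disc_add_pow' (e : ℕ) (z : ℂ) :
    ∫ w in ball (0:ℂ) 1, ‖w + z‖ ^ (2 * e) ∂discMeasure
      = ∑ j ∈ range (e+1), (e.choose j : ℝ)^2 / (j+1) * ‖z‖^(2*(e-j)) := by
  simpa using disc_add_pow e z 1

lemma triple_integral_eval (m : ℕ) :
    ∫ w₃ in ball (0:ℂ) 1, (∫ w₂ in ball (0:ℂ) 1, (∫ w₁ in ball (0:ℂ) 1,
        ‖w₁ + w₂ + w₃‖ ^ (2 * m) * (3 * (1 - ‖w₃‖ ^ 2) ^ 2)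
        ∂discMeasure) ∂discMeasure) ∂discMeasure = Sm m := by
  have h1 : ∀ w₂ w₃ : ℂ,
      (∫ w₁ in ball (0:ℂ) 1, ‖w₁ + w₂ + w₃‖ ^ (2 * m) * (3 * (1 - ‖w₃‖ ^ 2) ^ 2) ∂discMeasure)
        = (3 * (1 - ‖w₃‖ ^ 2) ^ 2) * ∑ k ∈ range (m+1),
            (m.choose k : ℝ)^2/((k:ℝ)+1) * ‖w₂ + w₃‖^(2*(m-k)) := by
    intro w₂ w₃
    simp only [add_assoc]
    exact disc_add_pow m (w₂ + w₃) _
  simp only [h1]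
  have h2 : ∀ w₃ : ℂ,
      (∫ w₂ in ball (0:ℂ) 1, (3 * (1 - ‖w₃‖ ^ 2) ^ 2) * ∑ k ∈ range (m+1),
          (m.choose k : ℝ)^2/((k:ℝ)+1) * ‖w₂ + w₃‖^(2*(m-k)) ∂discMeasure)
        = (3 * (1 - ‖w₃‖ ^ 2) ^ 2) * ∑ k ∈ range (m+1), ∑ j ∈ range (m-k+1),
            (m.choose k : ℝ)^2/((k:ℝ)+1) * (((m-k).choose j : ℝ)^2/((j:ℝ)+1))
              * ‖w₃‖^(2*(m-k-j)) := by
    intro w₃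
    rw [integral_const_mul]
    congr 1
    rw [integral_finset_sum _ (fun k _ =>
      integrableOn_disc_of_continuous _ (by fun_prop))]
    refine Finset.sum_congr rfl fun k _ => ?_
    rw [integral_const_mul, disc_add_pow', Finset.mul_sum]
    refine Finset.sum_congr rfl fun j _ => ?_
    ring
  simp only [h2]
  have h3 : ∀ w₃ : ℂ,
      (3 * (1 - ‖w₃‖ ^ 2) ^ 2) * ∑ k ∈ range (m+1), ∑ j ∈ range (m-k+1),
          (m.choose k : ℝ)^2/((k:ℝ)+1) * (((m-k).choose j : ℝ)^2/((j:ℝ)+1))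
            * ‖w₃‖^(2*(m-k-j))
        = ∑ k ∈ range (m+1), ∑ j ∈ range (m-k+1),
            (m.choose k : ℝ)^2/((k:ℝ)+1) * (((m-k).choose j : ℝ)^2/((j:ℝ)+1))
              * (‖w₃‖^(2*(m-k-j)) * (3 * (1 - ‖w₃‖ ^ 2) ^ 2)) := by
    intro w₃
    rw [Finset.mul_sum]
    refine Finset.sum_congr rfl fun k _ => ?_
    rw [Finset.mul_sum]
    refine Finset.sum_congr rfl fun j _ => ?_
    ring
  simp only [h3]
  rw [integral_finset_sum _ (fun k _ => integrable_finset_sum _ (fun j _ =>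
    (integrableOn_disc_of_continuous _ (by fun_prop)).integrable))]
  rw [Sm]
  refine Finset.sum_congr rfl fun k _ => ?_
  rw [integral_finset_sum _ (fun j _ => integrableOn_disc_of_continuous _ (by fun_prop))]
  refine Finset.sum_congr rfl fun j _ => ?_
  rw [integral_const_mul, disc_weight]

lemma sum_multiIndices3 {M : Type*} [AddCommMonoid M] (N : ℕ) (f : (Fin 3 → ℕ) → M) :
    ∑ β ∈ multiIndices3 N, f β
      = ∑ k ∈ range (N+1), ∑ j ∈ range (N-k+1), f ![k, j, N-k-j] := by
  have hsig : ∑ p ∈ (range (N+1)).sigma (fun k => range (N-k+1)), f ![p.1, p.2, N - p.1 - p.2]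
      = ∑ k ∈ range (N+1), ∑ j ∈ range (N-k+1), f ![k, j, N-k-j] := Finset.sum_sigma _ _ _
  rw [← hsig]
  refine Finset.sum_nbij' (fun β => (⟨β 0, β 1⟩ : Σ _ : ℕ, ℕ))
    (fun p => ![p.1, p.2, N - p.1 - p.2]) ?_ ?_ ?_ ?_ ?_
  · intro β hβ
    simp only [multiIndices3, Finset.mem_filter, Fintype.mem_piFinset, Finset.mem_range,
      Fin.sum_univ_three] at hβ
    simp only [Finset.mem_sigma, Finset.mem_range]
    omega
  · intro p hp
    simp only [Finset.mem_sigma, Finset.mem_range] at hp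
    simp only [multiIndices3, Finset.mem_filter, Fintype.mem_piFinset, Finset.mem_range,
      Fin.sum_univ_three]
    constructor
    · intro i
      fin_cases i <;> simp <;> omega
    · simp; omega
  · intro β hβ
    simp only [multiIndices3, Finset.mem_filter, Fintype.mem_piFinset, Finset.mem_range,
      Fin.sum_univ_three] at hβ
    funext i
    fin_cases i <;> simp <;> omega
  · intro p hp
    simp only [Finset.mem_sigma, Finset.mem_range] at hp
    simp
  · intro β hβ
    simp only [multiIndices3, Finset.mem_filter, Fintype.mem_piFinset, Finset.mem_range,
      Fin.sum_univ_three] at hβ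
    congr 1
    funext i
    fin_cases i <;> simp <;> omega

lemma shift_sum {M : Type*} [AddCommMonoid M] (m : ℕ) (g : ℕ → ℕ → M)
    (h0 : ∀ j, g 0 j = 0) (h0' : ∀ k, g k 0 = 0) :
    ∑ k ∈ range (m+2+1), ∑ j ∈ range (m+2-k+1), g k j
      = ∑ k ∈ range (m+1), ∑ j ∈ range (m-k+1), g (k+1) (j+1) := by
  rw [Finset.sum_range_succ']
  rw [Finset.sum_eq_zero (fun j _ => h0 j), add_zero]
  rw [Finset.sum_range_succ]
  rw [show m+2-(m+1+1)+1 = 1 from by omega]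
  rw [Finset.sum_range_one, h0', add_zero]
  refine Finset.sum_congr rfl fun k hk => ?_
  rw [Finset.mem_range] at hk
  rw [show m+2-(k+1)+1 = (m-k+1)+1 from by omega, Finset.sum_range_succ', h0', add_zero]

lemma natB (k j s : ℕ) :
    Nat.multinomial Finset.univ ![k, j, s] = (k+j+s).choose k * ((j+s).choose j) := by
  have hD : 0 < k.factorial * j.factorial * s.factorial := by positivity
  refine Nat.eq_of_mul_eq_mul_left hD ?_
  have h := Nat.multinomial_spec (Finset.univ : Finset (Fin 3)) ![k, j, s]
  rw [Fin.prod_univ_three, Fin.sum_univ_three] at h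
  simp only [Matrix.cons_val_zero, Matrix.cons_val_one, Matrix.head_cons,
    Matrix.cons_val_two, Matrix.tail_cons] at h
  rw [h]
  have h1 := Nat.choose_mul_factorial_mul_factorial (show k ≤ k+j+s by omega)
  have h2 := Nat.choose_mul_factorial_mul_factorial (show j ≤ j+s by omega)
  rw [show k+j+s-k = j+s from by omega] at h1
  rw [show j+s-j = s from by omega] at h2
  calc (k+j+s).factorial
      = (k+j+s).choose k * k.factorial * ((j+s).choose j * j.factorial * s.factorial) := by
        rw [h2, h1]
    _ = k.factorial * j.factorial * s.factorial * ((k+j+s).choose k * ((j+s).choose j)) := by ring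

lemma natA (k j s : ℕ) :
    Nat.multinomial Finset.univ ![k+1, j+1, s] * ((k+1) * (j+1))
      = (k+j+s+2) * (k+j+s+1) * Nat.multinomial Finset.univ ![k, j, s] := by
  have hD : 0 < k.factorial * j.factorial * s.factorial := by positivity
  refine Nat.eq_of_mul_eq_mul_left hD ?_
  have h1 := Nat.multinomial_spec (Finset.univ : Finset (Fin 3)) ![k+1, j+1, s]
  rw [Fin.prod_univ_three, Fin.sum_univ_three] at h1
  simp only [Matrix.cons_val_zero, Matrix.cons_val_one, Matrix.head_cons,
    Matrix.cons_val_two, Matrix.tail_cons] at h1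
  have h2 := Nat.multinomial_spec (Finset.univ : Finset (Fin 3)) ![k, j, s]
  rw [Fin.prod_univ_three, Fin.sum_univ_three] at h2
  simp only [Matrix.cons_val_zero, Matrix.cons_val_one, Matrix.head_cons,
    Matrix.cons_val_two, Matrix.tail_cons] at h2
  rw [show k+1+(j+1)+s = k+j+s+2 from by omega] at h1
  calc k.factorial * j.factorial * s.factorial
        * (Nat.multinomial Finset.univ ![k+1, j+1, s] * ((k+1) * (j+1)))
      = ((k+1).factorial * (j+1).factorial * s.factorial)
        * Nat.multinomial Finset.univ ![k+1, j+1, s] := by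
        rw [Nat.factorial_succ, Nat.factorial_succ]; ring
    _ = (k+j+s+2).factorial := h1
    _ = (k+j+s+2) * ((k+j+s+1) * (k+j+s).factorial) := by
        rw [Nat.factorial_succ, Nat.factorial_succ]
    _ = (k+j+s+2) * ((k+j+s+1) * (k.factorial * j.factorial * s.factorial
          * Nat.multinomial Finset.univ ![k, j, s])) := by rw [h2]
    _ = k.factorial * j.factorial * s.factorial
        * ((k+j+s+2) * (k+j+s+1) * Nat.multinomial Finset.univ ![k, j, s]) := by ring

lemma termReal (k j s : ℕ) :
    (Nat.multinomial Finset.univ ![k+1, j+1, s] : ℝ)^2 * ((k:ℝ)+1) * ((j:ℝ)+1)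
        / (((s:ℝ)+1) * ((s:ℝ)+2) * ((s:ℝ)+3))
      = ((k:ℝ)+(j:ℝ)+(s:ℝ)+2)^2 * ((k:ℝ)+(j:ℝ)+(s:ℝ)+1)^2 / 6
        * (((k+j+s).choose k : ℝ)^2/((k:ℝ)+1) * (((j+s).choose j : ℝ)^2/((j:ℝ)+1))
          * (6/(((s:ℝ)+1) * ((s:ℝ)+2) * ((s:ℝ)+3)))) := by
  have hA : Nat.multinomial Finset.univ ![k+1, j+1, s] * ((k+1) * (j+1))
      = (k+j+s+2) * (k+j+s+1) * ((k+j+s).choose k * ((j+s).choose j)) := by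
    rw [natA, natB]
  have hAR : (Nat.multinomial Finset.univ ![k+1, j+1, s] : ℝ) * (((k:ℝ)+1) * ((j:ℝ)+1))
      = ((k:ℝ)+(j:ℝ)+(s:ℝ)+2) * ((k:ℝ)+(j:ℝ)+(s:ℝ)+1)
        * (((k+j+s).choose k : ℝ) * (((j+s).choose j : ℝ))) := by
    exact_mod_cast congrArg (fun x : ℕ => (x : ℝ)) hA
  have hM : (Nat.multinomial Finset.univ ![k+1, j+1, s] : ℝ)
      = ((k:ℝ)+(j:ℝ)+(s:ℝ)+2) * ((k:ℝ)+(j:ℝ)+(s:ℝ)+1)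
        * (((k+j+s).choose k : ℝ) * (((j+s).choose j : ℝ))) / (((k:ℝ)+1) * ((j:ℝ)+1)) := by
    rw [eq_div_iff (by positivity)]
    exact hAR
  rw [hM]
  have h1 : ((k:ℝ)+1) ≠ 0 := by positivity
  have h2 : ((j:ℝ)+1) ≠ 0 := by positivity
  have h3 : ((s:ℝ)+1) * ((s:ℝ)+2) * ((s:ℝ)+3) ≠ 0 := by positivity
  field_simp

lemma sum_multiIndices3_shift (m : ℕ) (f : (Fin 3 → ℕ) → ℝ)
    (h0 : ∀ β : Fin 3 → ℕ, β 0 = 0 → f β = 0) (h1 : ∀ β : Fin 3 → ℕ, β 1 = 0 → f β = 0) :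
    ∑ β ∈ multiIndices3 (m+2), f β
      = ∑ k ∈ range (m+1), ∑ j ∈ range (m-k+1), f ![k+1, j+1, m-k-j] := by
  rw [sum_multiIndices3]
  rw [shift_sum m (fun k j => f ![k, j, m+2-k-j]) (fun j => h0 _ rfl) (fun k => h1 _ rfl)]
  refine Finset.sum_congr rfl fun k hk => Finset.sum_congr rfl fun j hj => ?_
  rw [Finset.mem_range] at hk hj
  congr 1
  funext i
  fin_cases i <;> simp <;> omega

lemma sum_eval (m : ℕ) :
    ∑ β ∈ multiIndices3 (m+2),
        (Nat.multinomial Finset.univ β : ℝ) ^ 2 * (β 0 : ℝ) * (β 1 : ℝ)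
          / (((β 2 : ℝ) + 1) * ((β 2 : ℝ) + 2) * ((β 2 : ℝ) + 3))
      = ((m:ℝ)+2)^2 * ((m:ℝ)+1)^2 / 6 * Sm m := by
  rw [sum_multiIndices3_shift m _ (fun β h => by rw [h]; simp) (fun β h => by rw [h]; simp)]
  rw [Sm, Finset.mul_sum]
  refine Finset.sum_congr rfl fun k hk => ?_
  rw [Finset.mul_sum]
  refine Finset.sum_congr rfl fun j hj => ?_
  rw [Finset.mem_range] at hk hj
  have hkj : k + j + (m-k-j) = m := by omega
  have hjs : j + (m-k-j) = m - k := by omega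
  have hcast : (k:ℝ) + (j:ℝ) + ((m-k-j:ℕ):ℝ) = (m:ℝ) := by
    exact_mod_cast congrArg (fun x : ℕ => (x:ℝ)) hkj
  have key := termReal k j (m-k-j)
  rw [hkj, hjs] at key
  rw [hcast] at key
  simp only [Matrix.cons_val_zero, Matrix.cons_val_one, Matrix.head_cons,
    Matrix.cons_val_two, Matrix.tail_cons]
  push_cast
  push_cast at key
  linear_combination key

end Helpers

theorem stmt_12 (n : ℕ) (hn : 2 ≤ n) :
    ((n : ℝ) + 1) * ∑ β ∈ multiIndices3 n,
        (Nat.multinomial Finset.univ β : ℝ) ^ 2 * (β 0 : ℝ) * (β 1 : ℝ)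
          / (((β 2 : ℝ) + 1) * ((β 2 : ℝ) + 2) * ((β 2 : ℝ) + 3))
      = ((n : ℝ) + 1) * (n : ℝ) ^ 2 * ((n : ℝ) - 1) ^ 2 / 6
          * ∫ w₃ in Metric.ball (0:ℂ) 1, (∫ w₂ in Metric.ball (0:ℂ) 1,
              (∫ w₁ in Metric.ball (0:ℂ) 1,
                ‖w₁ + w₂ + w₃‖ ^ (2 * (n - 2)) * (3 * (1 - ‖w₃‖ ^ 2) ^ 2)
                ∂discMeasure) ∂discMeasure) ∂discMeasure := by
  obtain ⟨m, rfl⟩ : ∃ m, n = m + 2 := ⟨n - 2, by omega⟩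
  rw [show m + 2 - 2 = m from rfl]
  rw [sum_eval m, triple_integral_eval m]
  push_cast
  ring
end

section
/- There exists ε₀ > 0 such that for all 0 < ε < ε₀, sup over (z₁,z₂,z₃) ∈ T³ of |z₁³ + z₂³ + z₁z₂z₃ − ε·z₃³| < 3. -/
open Real Complex

lemma key_real (a b ε : ℝ) (ha : |a| ≤ π) (hb : |b| ≤ π) (hε0 : 0 < ε)
    (hε : ε ≤ 1 / (3 * π ^ 2)) :
    (Real.cos a + Real.cos b + 1 - ε * Real.cos (a + b)) ^ 2
      + (Real.sin a + Real.sin b + ε * Real.sin (a + b)) ^ 2 ≤ (3 - ε) ^ 2 := by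
  have hπ2 : (0:ℝ) < π ^ 2 := by positivity
  have hεπ : ε * (3 * π ^ 2) ≤ 1 := (le_div_iff₀ (by positivity)).mp hε
  have h1 : Real.sin (a+b) ^ 2 + Real.cos (a+b) ^ 2 = 1 := Real.sin_sq_add_cos_sq _
  have hpa : Real.sin a ^ 2 + Real.cos a ^ 2 = 1 := Real.sin_sq_add_cos_sq _
  have hpb : Real.sin b ^ 2 + Real.cos b ^ 2 = 1 := Real.sin_sq_add_cos_sq _
  have h2 : Real.cos (2*a+b) = Real.cos a * Real.cos (a+b) - Real.sin a * Real.sin (a+b) := by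
    rw [show 2*a+b = a+(a+b) by ring]; exact Real.cos_add _ _
  have h3 : Real.cos (a+2*b) = Real.cos b * Real.cos (a+b) - Real.sin b * Real.sin (a+b) := by
    rw [show a+2*b = b+(a+b) by ring]; exact Real.cos_add _ _
  have h4 : Real.cos (a-b) = Real.cos a * Real.cos b + Real.sin a * Real.sin b := Real.cos_sub _ _
  have h5 : Real.cos (a-b) ≤ 1 := Real.cos_le_one _
  have h6 : Real.cos a ≤ 1 - 2 / π^2 * a^2 := Real.cos_le_one_sub_mul_cos_sq ha
  have h7 : Real.cos b ≤ 1 - 2 / π^2 * b^2 := Real.cos_le_one_sub_mul_cos_sq hb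
  have h8 : 1 - (2*a+b)^2/2 ≤ Real.cos (2*a+b) := Real.one_sub_sq_div_two_le_cos
  have h9 : 1 - (a+2*b)^2/2 ≤ Real.cos (a+2*b) := Real.one_sub_sq_div_two_le_cos
  have h10 : 1 - (a+b)^2/2 ≤ Real.cos (a+b) := Real.one_sub_sq_div_two_le_cos
  have hexp : (Real.cos a + Real.cos b + 1 - ε * Real.cos (a + b)) ^ 2
      + (Real.sin a + Real.sin b + ε * Real.sin (a + b)) ^ 2
      = 3 + 2 * Real.cos (a-b) + 2 * Real.cos a + 2 * Real.cos b + ε^2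
        - 2 * ε * (Real.cos (2*a+b) + Real.cos (a+2*b) + Real.cos (a+b)) := by
    linear_combination (ε^2) * h1 + hpa + hpb - 2 * h4 + 2 * ε * h2 + 2 * ε * h3
  rw [hexp]
  have hA : 2 * ε * (3 - (Real.cos (2*a+b) + Real.cos (a+2*b) + Real.cos (a+b)))
      ≤ 11 * ε * (a^2 + b^2) := by
    nlinarith [mul_nonneg hε0.le (sq_nonneg (a-b)), mul_le_mul_of_nonneg_left h8 hε0.le,
      mul_le_mul_of_nonneg_left h9 hε0.le, mul_le_mul_of_nonneg_left h10 hε0.le]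
  have hB : 11 * ε * (a^2 + b^2) ≤ 4 / π^2 * (a^2 + b^2) := by
    have h11 : 11 * ε ≤ 4 / π^2 := by
      rw [le_div_iff₀ hπ2]; linarith
    have hab : (0:ℝ) ≤ a^2 + b^2 := by positivity
    exact mul_le_mul_of_nonneg_right h11 hab
  have hC : 4 / π^2 * (a^2 + b^2) ≤ 2 * (1 - Real.cos a) + 2 * (1 - Real.cos b) := by
    have := h6; have := h7
    have e1 : 2 / π^2 * a^2 ≤ 1 - Real.cos a := by linarith
    have e2 : 2 / π^2 * b^2 ≤ 1 - Real.cos b := by linarith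
    have : 4 / π^2 * (a^2+b^2) = 2 * (2/π^2 * a^2) + 2 * (2/π^2*b^2) := by ring
    linarith
  linarith

lemma key_cx (a b ε : ℝ) (hε0 : 0 < ε) (hε : ε ≤ 1 / (3 * π ^ 2))
    (hreal : (Real.cos a + Real.cos b + 1 - ε * Real.cos (a + b)) ^ 2
      + (Real.sin a + Real.sin b + ε * Real.sin (a + b)) ^ 2 ≤ (3 - ε) ^ 2) :
    ‖Complex.exp (a * I) + Complex.exp (b * I) + 1
        - (ε : ℂ) * Complex.exp (-((a : ℂ) + b) * I)‖ ≤ 3 - ε := by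
  set z := Complex.exp (a * I) + Complex.exp (b * I) + 1
        - (ε : ℂ) * Complex.exp (-((a : ℂ) + b) * I) with hz
  have eexp : Complex.exp (-((a : ℂ) + b) * I)
      = ((Real.cos (a+b) : ℝ) : ℂ) - ((Real.sin (a+b) : ℝ) : ℂ) * I := by
    rw [show (-((a:ℂ)+b)*I) = ((-(a+b):ℝ):ℂ) * I by push_cast; ring, Complex.exp_mul_I,
      ← Complex.ofReal_cos, ← Complex.ofReal_sin, Real.cos_neg, Real.sin_neg]
    push_cast; ring
  have hre : z.re = Real.cos a + Real.cos b + 1 - ε * Real.cos (a + b) := by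
    rw [hz, eexp]
    simp [Complex.exp_ofReal_mul_I_re, Complex.exp_ofReal_mul_I_im, ← Complex.ofReal_add, Complex.cos_ofReal_re, Complex.cos_ofReal_im, Complex.sin_ofReal_re, Complex.sin_ofReal_im]
  have him : z.im = Real.sin a + Real.sin b + ε * Real.sin (a + b) := by
    rw [hz, eexp]
    simp [Complex.exp_ofReal_mul_I_re, Complex.exp_ofReal_mul_I_im, ← Complex.ofReal_add, Complex.cos_ofReal_re, Complex.cos_ofReal_im, Complex.sin_ofReal_re, Complex.sin_ofReal_im]
  have hsq : ‖z‖ ^ 2 = z.re ^ 2 + z.im ^ 2 := by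
    rw [Complex.sq_norm, Complex.normSq_apply]; ring
  have hb2 : ‖z‖ ^ 2 ≤ (3 - ε) ^ 2 := by rw [hsq, hre, him]; exact hreal
  have h3ε : (0:ℝ) ≤ 3 - ε := by
    have hπ : (3:ℝ) < π := by have := Real.pi_gt_d6; linarith
    have : ε ≤ 1 := le_trans hε (by rw [div_le_one (by positivity)]; nlinarith)
    linarith
  nlinarith [norm_nonneg z]

lemma key_reduce (ε : ℝ) (z₁ z₂ z₃ : ℂ) (h1 : ‖z₁‖ = 1) (h2 : ‖z₂‖ = 1) (h3 : ‖z₃‖ = 1) :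
    ∃ a b : ℝ, |a| ≤ π ∧ |b| ≤ π ∧
      ‖z₁ ^ 3 + z₂ ^ 3 + z₁ * z₂ * z₃ - (ε : ℂ) * z₃ ^ 3‖
        = ‖Complex.exp (a * I) + Complex.exp (b * I) + 1
            - (ε : ℂ) * Complex.exp (-((a : ℂ) + b) * I)‖ := by
  set w := z₁ * z₂ * z₃ with hwdef
  set u := z₁ ^ 3 * (starRingEnd ℂ) w with hudef
  set v := z₂ ^ 3 * (starRingEnd ℂ) w with hvdef
  have hn1 : z₁ ≠ 0 := by intro h; rw [h] at h1; simp at h1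
  have hn2 : z₂ ≠ 0 := by intro h; rw [h] at h2; simp at h2
  have hn3 : z₃ ≠ 0 := by intro h; rw [h] at h3; simp at h3
  have hc1 : (starRingEnd ℂ) z₁ = z₁⁻¹ := (Complex.inv_eq_conj h1).symm
  have hc2 : (starRingEnd ℂ) z₂ = z₂⁻¹ := (Complex.inv_eq_conj h2).symm
  have hc3 : (starRingEnd ℂ) z₃ = z₃⁻¹ := (Complex.inv_eq_conj h3).symm
  have hwn : ‖w‖ = 1 := by rw [hwdef]; simp [h1, h2, h3]
  have hun : ‖u‖ = 1 := by
    rw [hudef, norm_mul, norm_pow, h1, RCLike.norm_conj, hwn]; norm_num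
  have hvn : ‖v‖ = 1 := by
    rw [hvdef, norm_mul, norm_pow, h2, RCLike.norm_conj, hwn]; norm_num
  obtain ⟨a, ha, hu⟩ : ∃ a : ℝ, |a| ≤ π ∧ Complex.exp ((a : ℂ) * I) = u := by
    refine ⟨Complex.arg u, Complex.abs_arg_le_pi u, ?_⟩
    have := Complex.norm_mul_exp_arg_mul_I u
    rwa [hun,
      Complex.ofReal_one, one_mul] at this
  obtain ⟨b, hb, hv⟩ : ∃ b : ℝ, |b| ≤ π ∧ Complex.exp ((b : ℂ) * I) = v := by
    refine ⟨Complex.arg v, Complex.abs_arg_le_pi v, ?_⟩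
    have := Complex.norm_mul_exp_arg_mul_I v
    rwa [hvn,
      Complex.ofReal_one, one_mul] at this
  refine ⟨a, b, ha, hb, ?_⟩
  have hcu : Complex.exp (-((a : ℂ)) * I) = (starRingEnd ℂ) u := by
    rw [show -((a:ℂ)) * I = (starRingEnd ℂ) ((a:ℂ) * I) from by
      rw [map_mul, Complex.conj_I, Complex.conj_ofReal]; ring]
    rw [Complex.exp_conj, hu]
  have hcv : Complex.exp (-((b : ℂ)) * I) = (starRingEnd ℂ) v := by
    rw [show -((b:ℂ)) * I = (starRingEnd ℂ) ((b:ℂ) * I) from by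
      rw [map_mul, Complex.conj_I, Complex.conj_ofReal]; ring]
    rw [Complex.exp_conj, hv]
  have hexp : Complex.exp (-((a : ℂ) + b) * I) = (starRingEnd ℂ) u * (starRingEnd ℂ) v := by
    rw [show (-((a : ℂ) + b) * I) = -((a:ℂ)) * I + -((b:ℂ)) * I from by ring,
      Complex.exp_add, hcu, hcv]
  have hkey : (starRingEnd ℂ) w * (z₁ ^ 3 + z₂ ^ 3 + z₁ * z₂ * z₃ - (ε : ℂ) * z₃ ^ 3)
      = u + v + 1 - (ε : ℂ) * ((starRingEnd ℂ) u * (starRingEnd ℂ) v) := by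
    have hcw : (starRingEnd ℂ) w = z₁⁻¹ * z₂⁻¹ * z₃⁻¹ := by
      rw [hwdef, map_mul, map_mul, hc1, hc2, hc3]
    have hcu2 : (starRingEnd ℂ) u = z₁⁻¹ ^ 3 * (z₁ * z₂ * z₃) := by
      rw [hudef, map_mul, map_pow, hc1, Complex.conj_conj, hwdef]
    have hcv2 : (starRingEnd ℂ) v = z₂⁻¹ ^ 3 * (z₁ * z₂ * z₃) := by
      rw [hvdef, map_mul, map_pow, hc2, Complex.conj_conj, hwdef]
    rw [hcu2, hcv2, hudef, hvdef, hcw]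
    field_simp
  calc ‖z₁ ^ 3 + z₂ ^ 3 + z₁ * z₂ * z₃ - (ε : ℂ) * z₃ ^ 3‖
      = ‖(starRingEnd ℂ) w‖ * ‖z₁ ^ 3 + z₂ ^ 3 + z₁ * z₂ * z₃ - (ε : ℂ) * z₃ ^ 3‖ := by
        rw [RCLike.norm_conj, hwn, one_mul]
    _ = ‖(starRingEnd ℂ) w * (z₁ ^ 3 + z₂ ^ 3 + z₁ * z₂ * z₃ - (ε : ℂ) * z₃ ^ 3)‖ :=
        (norm_mul _ _).symm
    _ = ‖Complex.exp ((a : ℂ) * I) + Complex.exp ((b : ℂ) * I) + 1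
          - (ε : ℂ) * Complex.exp (-((a : ℂ) + b) * I)‖ := by
        rw [hkey, hu, hv, hexp]

theorem stmt_13 :
    ∃ ε₀ : ℝ, 0 < ε₀ ∧ ∀ ε : ℝ, 0 < ε → ε < ε₀ →
      sSup {t : ℝ | ∃ z₁ z₂ z₃ : ℂ, ‖z₁‖ = 1 ∧ ‖z₂‖ = 1 ∧ ‖z₃‖ = 1 ∧
          t = ‖z₁ ^ 3 + z₂ ^ 3 + z₁ * z₂ * z₃ - (ε : ℂ) * z₃ ^ 3‖} < 3 := by
  refine ⟨1 / (3 * π ^ 2), by positivity, fun ε hε0 hεlt => ?_⟩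
  have hε : ε ≤ 1 / (3 * π ^ 2) := hεlt.le
  have hbound : ∀ t ∈ {t : ℝ | ∃ z₁ z₂ z₃ : ℂ, ‖z₁‖ = 1 ∧ ‖z₂‖ = 1 ∧ ‖z₃‖ = 1 ∧
      t = ‖z₁ ^ 3 + z₂ ^ 3 + z₁ * z₂ * z₃ - (ε : ℂ) * z₃ ^ 3‖}, t ≤ 3 - ε := by
    rintro t ⟨z₁, z₂, z₃, h1, h2, h3, rfl⟩
    obtain ⟨a, b, ha, hb, heq⟩ := key_reduce ε z₁ z₂ z₃ h1 h2 h3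
    rw [heq]
    exact key_cx a b ε hε0 hε (key_real a b ε ha hb hε0 hε)
  have h3ε : (0:ℝ) ≤ 3 - ε := by
    have hπ : (3:ℝ) < π := by have := Real.pi_gt_d6; linarith
    have : ε ≤ 1 := le_trans hε (by rw [div_le_one (by positivity)]; nlinarith)
    linarith
  have := Real.sSup_le hbound h3ε
  linarith
end
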